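/- arXiv:1110.3626 — 2 statements merged into one kernel-verified Lean document; each statement's English description precedes it below -/
import Mathlib

section
/- Let G₀ be a 3-connected combinatorial graph and let G be a quantum graph with underlying combinatorial graph G₀ and length function L : E → ℝ_{>0}. If two length functions L and L' on G₀ assign the same length to every cycle of G₀, then L = L', i.e., the lengths of all cycles determine the length of every edge. -/
/-- A finite multigraph: each edge is assigned an ordered pair of endpoints. -/
structure Multigraph (V E : Type) where
  ends : E → V × V

namespace Multigraph

variable {V E : Type} (G : Multigraph V E)

/-- `u` and `v` are joined by an edge in `S`. -/
def Adj (S : Set E) (u v : V) : Prop :=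
  ∃ e ∈ S, G.ends e = (u, v) ∨ G.ends e = (v, u)

/-- The graph is connected via the edges in `S`. -/
def ConnectedVia (S : Set E) : Prop :=
  ∀ u v : V, Relation.ReflTransGen (G.Adj S) u v

def Connected : Prop := G.ConnectedVia Set.univ

/-- Degree of a vertex: the number of edge-endpoints at `v` (a loop counts twice). -/
def degree [Fintype E] [DecidableEq V] (v : V) : ℕ :=
  ∑ e : E, ((if (G.ends e).1 = v then 1 else 0) + (if (G.ends e).2 = v then 1 else 0))

end Multigraph

namespace Multigraph

variable {V E : Type} (G : Multigraph V E)

/-- Number of edge-endpoints of edges of `C` at the vertex `v` (a loop counts twice). -/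
def edgeCount [DecidableEq V] (C : Finset E) (v : V) : ℕ :=
  ∑ e ∈ C, ((if (G.ends e).1 = v then 1 else 0) + (if (G.ends e).2 = v then 1 else 0))

/-- `v` is an endpoint of some edge of `C`. -/
def Incident (C : Finset E) (v : V) : Prop :=
  ∃ e ∈ C, (G.ends e).1 = v ∨ (G.ends e).2 = v

/-- `C` is the edge set of a cycle: it is nonempty, every vertex meets either `0` or
exactly `2` edge-endpoints of `C`, and `C` is connected. -/
def IsCycle [DecidableEq V] (C : Finset E) : Prop :=
  C.Nonempty ∧ (∀ v : V, G.edgeCount C v = 0 ∨ G.edgeCount C v = 2) ∧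
    ∀ u w : V, G.Incident C u → G.Incident C w →
      Relation.ReflTransGen (G.Adj (↑C : Set E)) u w

end Multigraph

namespace Multigraph

variable {V E : Type}

/-- `IsWalk G vs es` : `vs` is the list of visited vertices and `es` the list of
traversed edges of a walk in `G`. -/
def IsWalk (G : Multigraph V E) : List V → List E → Prop
  | [_], [] => True
  | u :: w :: vs, e :: es =>
      (G.ends e = (u, w) ∨ G.ends e = (w, u)) ∧ IsWalk G (w :: vs) es
  | _, _ => False

/-- A path from `u` to `v` with vertex list `vs` and edge list `es`:
a walk with no repeated vertices and no repeated edges. -/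
def IsPath (G : Multigraph V E) (u v : V) (vs : List V) (es : List E) : Prop :=
  G.IsWalk vs es ∧ vs.Nodup ∧ es.Nodup ∧ vs.head? = some u ∧ vs.getLast? = some v

/-- `G` is 3-connected: any two distinct vertices are joined by three pairwise
internally disjoint paths (sharing no edges and no vertices besides the endpoints). -/
def ThreeConnected (G : Multigraph V E) : Prop :=
  ∀ u v : V, u ≠ v →
    ∃ p : Fin 3 → List V × List E,
      (∀ i, G.IsPath u v (p i).1 (p i).2) ∧
      ∀ i j, i ≠ j →
        (∀ x ∈ (p i).1, x ∈ (p j).1 → x = u ∨ x = v) ∧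
        (∀ e ∈ (p i).2, e ∉ (p j).2)

end Multigraph

namespace MGAux

open Multigraph

variable {V E : Type} [DecidableEq V] [DecidableEq E]
set_option linter.unusedSectionVars false

/-- endpoint-count contribution of one edge at x -/
def cnt (G : Multigraph V E) (x : V) (e : E) : ℕ :=
  (if (G.ends e).1 = x then 1 else 0) + (if (G.ends e).2 = x then 1 else 0)

lemma walk_count (G : Multigraph V E) :
    ∀ (es : List E) (vs : List V), G.IsWalk vs es → ∀ x : V,
    (es.map (cnt G x)).sum
      + (if vs.head? = some x then 1 else 0)
      + (if vs.getLast? = some x then 1 else 0)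
    = 2 * vs.count x := by
  intro es
  induction es with
  | nil =>
    intro vs h x
    match vs with
    | [] => exact h.elim
    | [w] =>
      simp only [List.map_nil, List.sum_nil, List.head?_cons, List.getLast?_singleton,
        List.count_cons, List.count_nil, Option.some.injEq]
      by_cases hw : w = x <;> simp [hw]
    | a :: b :: t => exact h.elim
  | cons e es ih =>
    intro vs h x
    match vs with
    | [] => exact h.elim
    | [w] => exact h.elim
    | u :: w :: rest =>
      obtain ⟨he, hw⟩ := h
      have IH := ih (w :: rest) hw x
      have hcnt : cnt G x e = (if u = x then 1 else 0) + (if w = x then 1 else 0) := by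
        rcases he with he | he <;> simp [cnt, he] <;> omega
      simp only [List.map_cons, List.sum_cons, List.head?_cons, List.getLast?_cons_cons,
        List.count_cons, Option.some.injEq] at IH ⊢
      rw [hcnt]
      by_cases hu : u = x <;> by_cases hwx : w = x <;>
        simp [hu, hwx] at IH ⊢ <;> omega

lemma walk_mem_ends (G : Multigraph V E) :
    ∀ (es : List E) (vs : List V), G.IsWalk vs es → ∀ e ∈ es,
      (G.ends e).1 ∈ vs ∧ (G.ends e).2 ∈ vs := by
  intro es
  induction es with
  | nil => intro vs _ e he; exact absurd he List.not_mem_nil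
  | cons e' es ih =>
    intro vs h e he
    match vs with
    | [] => exact h.elim
    | [w] => exact h.elim
    | u :: w :: rest =>
      obtain ⟨he', hw⟩ := h
      rcases List.mem_cons.1 he with rfl | hmem
      · rcases he' with h1 | h1 <;> rw [h1] <;> simp
      · have := ih (w :: rest) hw e hmem
        exact ⟨List.mem_cons_of_mem _ this.1, List.mem_cons_of_mem _ this.2⟩

lemma adj_mono (G : Multigraph V E) {S S' : Set E} (h : S ⊆ S') {u v : V}
    (ha : G.Adj S u v) : G.Adj S' u v := by
  obtain ⟨e, he, h2⟩ := ha; exact ⟨e, h he, h2⟩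

lemma adj_symm (G : Multigraph V E) {S : Set E} : Symmetric (G.Adj S) := by
  intro u v ⟨e, he, h2⟩; exact ⟨e, he, h2.symm⟩

lemma walk_reach (G : Multigraph V E) :
    ∀ (es : List E) (vs : List V) (u : V), G.IsWalk vs es → vs.head? = some u →
      ∀ x ∈ vs, Relation.ReflTransGen (G.Adj {e | e ∈ es}) u x := by
  intro es
  induction es with
  | nil =>
    intro vs u h hh x hx
    match vs with
    | [] => exact h.elim
    | [w] =>
      simp only [List.head?_cons, Option.some.injEq] at hh
      simp only [List.mem_singleton] at hx
      subst hh; subst hx; exact Relation.ReflTransGen.refl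
    | a :: b :: t => exact h.elim
  | cons e es ih =>
    intro vs u h hh x hx
    match vs with
    | [] => exact h.elim
    | [w] => exact h.elim
    | a :: w :: rest =>
      simp only [List.head?_cons, Option.some.injEq] at hh
      subst hh
      obtain ⟨he, hwalk⟩ := h
      rcases List.mem_cons.1 hx with rfl | hx'
      · exact Relation.ReflTransGen.refl
      · have step : G.Adj {e' | e' ∈ e :: es} a w :=
          ⟨e, by simp, he⟩
        have tail := ih (w :: rest) w hwalk (by simp) x hx'
        have tail' : Relation.ReflTransGen (G.Adj {e' | e' ∈ e :: es}) w x :=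
          Relation.ReflTransGen.mono
            (fun a b hab => adj_mono G (fun e' (he' : e' ∈ es) => List.mem_cons_of_mem _ he') hab) _ _
            tail
        exact Relation.ReflTransGen.head step tail'

lemma path_edges_nonempty {G : Multigraph V E} {u v : V} {vs : List V} {es : List E}
    (hp : G.IsPath u v vs es) (huv : u ≠ v) : es ≠ [] := by
  intro h
  subst h
  obtain ⟨hw, _, _, hh, hl⟩ := hp
  match vs with
  | [] => exact hw.elim
  | [w] =>
    simp only [List.head?_cons, List.getLast?_singleton, Option.some.injEq] at hh hl
    exact huv (hh ▸ hl ▸ rfl)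
  | a :: b :: t => exact hw.elim

lemma path_mem_head {G : Multigraph V E} {u v : V} {vs : List V} {es : List E}
    (hp : G.IsPath u v vs es) : u ∈ vs := by
  obtain ⟨_, _, _, hh, _⟩ := hp
  match vs with
  | [] => simp at hh
  | a :: t => simp only [List.head?_cons, Option.some.injEq] at hh; exact hh ▸ List.mem_cons_self

lemma path_mem_last {G : Multigraph V E} {u v : V} {vs : List V} {es : List E}
    (hp : G.IsPath u v vs es) : v ∈ vs := by
  obtain ⟨_, _, _, _, hl⟩ := hp
  exact List.mem_of_mem_getLast? (by rw [hl]; rfl)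

lemma path_count (G : Multigraph V E) {u v : V} {vs : List V} {es : List E}
    (hp : G.IsPath u v vs es) (x : V) :
    (es.map (cnt G x)).sum + (if u = x then 1 else 0) + (if v = x then 1 else 0)
      = 2 * vs.count x := by
  obtain ⟨hw, _, _, hh, hl⟩ := hp
  have := walk_count G es vs hw x
  rw [hh, hl] at this
  simpa using this

end MGAux

namespace MGAux2
open Multigraph MGAux

variable {V E : Type} [DecidableEq V] [DecidableEq E]

lemma count_le_one {l : List V} (h : l.Nodup) (x : V) : l.count x ≤ 1 :=
  List.nodup_iff_count_le_one.1 h x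

lemma one_le_count {l : List V} {x : V} (h : x ∈ l) : 1 ≤ l.count x :=
  List.count_pos_iff.2 h

lemma isCycle_insert (G : Multigraph V E) {u v : V} {vs : List V} {es : List E} {e0 : E}
    (hp : G.IsPath u v vs es) (huv : u ≠ v) (he0 : e0 ∉ es)
    (hend : G.ends e0 = (u, v) ∨ G.ends e0 = (v, u)) :
    G.IsCycle (insert e0 es.toFinset) := by
  have hnd := hp.2.2.1
  have hsum : ∀ x, G.edgeCount (insert e0 es.toFinset) x
      = cnt G x e0 + (es.map (cnt G x)).sum := by
    intro x
    rw [edgeCount, Finset.sum_insert (by simpa using he0)]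
    rw [List.sum_toFinset _ hnd]
    rfl
  refine ⟨⟨e0, Finset.mem_insert_self _ _⟩, ?_, ?_⟩
  · intro x
    have h1 := path_count G hp x
    have hc1 : cnt G x e0 = (if u = x then 1 else 0) + (if v = x then 1 else 0) := by
      rcases hend with h | h <;> simp [cnt, h] <;> omega
    have hle := count_le_one hp.2.1 x
    rw [hsum x, hc1]
    omega
  · have hmem : ∀ x, G.Incident (insert e0 es.toFinset) x → x ∈ vs := by
      intro x ⟨e, he, hends⟩
      rcases Finset.mem_insert.1 he with rfl | he'
      · rcases hend with h | h <;> rw [h] at hends <;>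
          rcases hends with rfl | rfl <;>
          first
            | exact path_mem_head hp
            | exact path_mem_last hp
      · have := walk_mem_ends G es vs hp.1 e (List.mem_toFinset.1 he')
        rcases hends with rfl | rfl
        · exact this.1
        · exact this.2
    intro x y hx hy
    have hsub : {e | e ∈ es} ⊆ (↑(insert e0 es.toFinset) : Set E) := by
      intro e he
      simp only [Finset.coe_insert, Set.mem_insert_iff, Finset.mem_coe, List.mem_toFinset]
      exact Or.inr he
    have reach : ∀ z ∈ vs, Relation.ReflTransGen (G.Adj (↑(insert e0 es.toFinset) : Set E)) u z := by
      intro z hz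
      exact Relation.ReflTransGen.mono (fun a b hab => adj_mono G hsub hab) _ _
        (walk_reach G es vs u hp.1 hp.2.2.2.1 z hz)
    have hsymm : ∀ ⦃a b : V⦄, Relation.ReflTransGen (G.Adj (↑(insert e0 es.toFinset) : Set E)) a b → Relation.ReflTransGen (G.Adj (↑(insert e0 es.toFinset) : Set E)) b a :=
      fun a b h => (@Relation.ReflTransGen.symmetric _ _ ⟨fun a b h => adj_symm G (S := (↑(insert e0 es.toFinset) : Set E)) h⟩).symm a b h
    exact (hsymm (reach x (hmem x hx))).trans (reach y (hmem y hy))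

lemma isCycle_union (G : Multigraph V E) {u v : V} {vs1 vs2 : List V} {es1 es2 : List E}
    (hp1 : G.IsPath u v vs1 es1) (hp2 : G.IsPath u v vs2 es2) (huv : u ≠ v)
    (hvdisj : ∀ x ∈ vs1, x ∈ vs2 → x = u ∨ x = v)
    (hedisj : ∀ e ∈ es1, e ∉ es2) :
    G.IsCycle (es1.toFinset ∪ es2.toFinset) := by
  have hdisj : Disjoint es1.toFinset es2.toFinset := by
    rw [Finset.disjoint_left]
    intro e he1 he2
    exact hedisj e (List.mem_toFinset.1 he1) (List.mem_toFinset.1 he2)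
  have hsum : ∀ x, G.edgeCount (es1.toFinset ∪ es2.toFinset) x
      = (es1.map (cnt G x)).sum + (es2.map (cnt G x)).sum := by
    intro x
    rw [edgeCount, Finset.sum_union hdisj,
      List.sum_toFinset _ hp1.2.2.1, List.sum_toFinset _ hp2.2.2.1]
    rfl
  refine ⟨?_, ?_, ?_⟩
  · obtain ⟨e, he⟩ := List.exists_mem_of_ne_nil _ (path_edges_nonempty hp1 huv)
    exact ⟨e, Finset.mem_union_left _ (List.mem_toFinset.2 he)⟩
  · intro x
    have h1 := path_count G hp1 x
    have h2 := path_count G hp2 x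
    have hle1 := count_le_one hp1.2.1 x
    have hle2 := count_le_one hp2.2.1 x
    have hu1 : u = x → 1 ≤ vs1.count x ∧ 1 ≤ vs2.count x := by
      rintro rfl; exact ⟨one_le_count (path_mem_head hp1), one_le_count (path_mem_head hp2)⟩
    have hv1 : v = x → 1 ≤ vs1.count x ∧ 1 ≤ vs2.count x := by
      rintro rfl; exact ⟨one_le_count (path_mem_last hp1), one_le_count (path_mem_last hp2)⟩
    have hd : 1 ≤ vs1.count x → 1 ≤ vs2.count x → u = x ∨ v = x := by
      intro hc1 hc2
      have := hvdisj x (List.count_pos_iff.1 hc1) (List.count_pos_iff.1 hc2)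
      tauto
    have hne : ¬(u = x ∧ v = x) := by rintro ⟨rfl, rfl⟩; exact huv rfl
    rw [hsum x]
    by_cases hux : u = x
    · by_cases hvx : v = x
      · exact absurd ⟨hux, hvx⟩ hne
      · have h := hu1 hux
        simp only [if_pos hux, if_neg hvx] at h1 h2
        omega
    · by_cases hvx : v = x
      · have h := hv1 hvx
        simp only [if_neg hux, if_pos hvx] at h1 h2
        omega
      · simp only [if_neg hux, if_neg hvx] at h1 h2
        rcases Nat.eq_zero_or_pos (vs1.count x) with hc | hc
        · omega
        · rcases Nat.eq_zero_or_pos (vs2.count x) with hc' | hc'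
          · omega
          · rcases hd hc hc' with h | h
            · exact absurd h hux
            · exact absurd h hvx
  · have hmem : ∀ x, G.Incident (es1.toFinset ∪ es2.toFinset) x → x ∈ vs1 ∨ x ∈ vs2 := by
      intro x ⟨e, he, hends⟩
      rcases Finset.mem_union.1 he with he' | he'
      · have := walk_mem_ends G es1 vs1 hp1.1 e (List.mem_toFinset.1 he')
        rcases hends with rfl | rfl
        · exact Or.inl this.1
        · exact Or.inl this.2
      · have := walk_mem_ends G es2 vs2 hp2.1 e (List.mem_toFinset.1 he')
        rcases hends with rfl | rfl
        · exact Or.inr this.1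
        · exact Or.inr this.2
    intro x y hx hy
    set C := es1.toFinset ∪ es2.toFinset with hC
    have reach : ∀ z, z ∈ vs1 ∨ z ∈ vs2 → Relation.ReflTransGen (G.Adj (↑C : Set E)) u z := by
      rintro z (hz | hz)
      · refine Relation.ReflTransGen.mono (fun a b hab => adj_mono G ?_ hab) _ _
          (walk_reach G es1 vs1 u hp1.1 hp1.2.2.2.1 z hz)
        intro e he; simp only [hC, Finset.coe_union, Set.mem_union, Finset.mem_coe,
          List.mem_toFinset]; exact Or.inl he
      · refine Relation.ReflTransGen.mono (fun a b hab => adj_mono G ?_ hab) _ _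
          (walk_reach G es2 vs2 u hp2.1 hp2.2.2.2.1 z hz)
        intro e he; simp only [hC, Finset.coe_union, Set.mem_union, Finset.mem_coe,
          List.mem_toFinset]; exact Or.inr he
    have hsymm : ∀ ⦃a b : V⦄, Relation.ReflTransGen (G.Adj (↑C : Set E)) a b → Relation.ReflTransGen (G.Adj (↑C : Set E)) b a :=
      fun a b h => (@Relation.ReflTransGen.symmetric _ _ ⟨fun a b h => adj_symm G (S := (↑C : Set E)) h⟩).symm a b h
    exact (hsymm (reach x (hmem x hx))).trans (reach y (hmem y hy))

end MGAux2

/-- For a 3-connected combinatorial graph, the lengths of all cycles determine the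
lengths of all edges: two positive length functions assigning the same total length
to every cycle are equal. -/
theorem edge_lengths_determined_by_cycle_lengths {V E : Type}
    [DecidableEq V] [DecidableEq E]
    (G : Multigraph V E) (h3 : G.ThreeConnected)
    (L L' : E → ℝ) (hL : ∀ e, 0 < L e) (hL' : ∀ e, 0 < L' e)
    (hcyc : ∀ C : Finset E, G.IsCycle C → ∑ e ∈ C, L e = ∑ e ∈ C, L' e) :
    L = L' := by
  funext e0
  obtain ⟨a, b, hab⟩ : ∃ a b, G.ends e0 = (a, b) := ⟨_, _, rfl⟩
  by_cases hloop : a = b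
  · subst hloop
    have hc : G.IsCycle {e0} := by
      refine ⟨⟨e0, Finset.mem_singleton_self e0⟩, ?_, ?_⟩
      · intro x
        simp only [Multigraph.edgeCount, Finset.sum_singleton, hab]
        by_cases h : a = x <;> simp [h]
      · intro x y hx hy
        obtain ⟨e, he, hends⟩ := hx
        obtain ⟨e', he', hends'⟩ := hy
        simp only [Finset.mem_singleton] at he he'
        subst he; subst he'
        rw [hab] at hends hends'
        simp only [or_self] at hends hends'
        subst hends; subst hends'
        exact Relation.ReflTransGen.refl
    have := hcyc {e0} hc
    simpa using this
  · obtain ⟨p, hpaths, hdisj⟩ := h3 a b hloop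
    obtain ⟨i, j, hij, hi, hj⟩ : ∃ i j : Fin 3, i ≠ j ∧ e0 ∉ (p i).2 ∧ e0 ∉ (p j).2 := by
      by_cases h0 : e0 ∈ (p 0).2
      · exact ⟨1, 2, by decide, (hdisj 0 1 (by decide)).2 e0 h0, (hdisj 0 2 (by decide)).2 e0 h0⟩
      · by_cases h1 : e0 ∈ (p 1).2
        · exact ⟨0, 2, by decide, h0, (hdisj 1 2 (by decide)).2 e0 h1⟩
        · exact ⟨0, 1, by decide, h0, h1⟩
    have hc1 := MGAux2.isCycle_insert G (hpaths i) hloop hi (Or.inl hab)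
    have hc2 := MGAux2.isCycle_insert G (hpaths j) hloop hj (Or.inl hab)
    have hc3 := MGAux2.isCycle_union G (hpaths i) (hpaths j) hloop
      (fun x hx hx' => (hdisj i j hij).1 x hx hx') ((hdisj i j hij).2)
    have e1 := hcyc _ hc1
    have e2 := hcyc _ hc2
    have e3 := hcyc _ hc3
    have hni : e0 ∉ (p i).2.toFinset := by simpa using hi
    have hnj : e0 ∉ (p j).2.toFinset := by simpa using hj
    rw [Finset.sum_insert hni, Finset.sum_insert hni] at e1
    rw [Finset.sum_insert hnj, Finset.sum_insert hnj] at e2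
    have hdfin : Disjoint (p i).2.toFinset (p j).2.toFinset := by
      rw [Finset.disjoint_left]
      intro e he1 he2
      exact (hdisj i j hij).2 e (List.mem_toFinset.1 he1) (List.mem_toFinset.1 he2)
    rw [Finset.sum_union hdfin, Finset.sum_union hdfin] at e3
    linarith
end

section
/- Let T be a finite metric tree (a quantum graph whose underlying graph is a tree) with no vertices of degree 2. Then T is determined up to isometry by the matrix of pairwise distances between its leaves: if two such trees have leaf sets in bijection so that corresponding leaf-distances agree, the trees are isomorphic as metric graphs (same underlying combinatorial tree and same edge lengths). -/
namespace Multigraph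

variable {V E : Type}

/-- The path metric: the infimum of total lengths of paths joining `u` to `v`. -/
noncomputable def dist (G : Multigraph V E) (ℓ : E → ℝ) (u v : V) : ℝ :=
  sInf {x : ℝ | ∃ (vs : List V) (es : List E), G.IsPath u v vs es ∧ x = (es.map ℓ).sum}

/-- A leaf is a vertex of degree 1. -/
def IsLeaf (G : Multigraph V E) [Fintype E] [DecidableEq V] (v : V) : Prop :=
  G.degree v = 1

/-- The graph is a tree: connected and without cycles. -/
def IsTree (G : Multigraph V E) [DecidableEq V] : Prop :=
  G.Connected ∧ ∀ C : Finset E, ¬ G.IsCycle C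

end Multigraph

attribute [local instance] Classical.propDecidable

namespace Multigraph

variable {V E : Type}

lemma adj_symm (G : Multigraph V E) {S : Set E} {u v : V} (h : G.Adj S u v) : G.Adj S v u := by
  obtain ⟨e, he, h⟩ := h
  exact ⟨e, he, h.symm⟩

lemma adj_mono (G : Multigraph V E) {S T : Set E} (hST : S ⊆ T) {u v : V}
    (h : G.Adj S u v) : G.Adj T u v := by
  obtain ⟨e, he, h⟩ := h
  exact ⟨e, hST he, h⟩

lemma reach_symm (G : Multigraph V E) {S : Set E} {u v : V}
    (h : Relation.ReflTransGen (G.Adj S) u v) : Relation.ReflTransGen (G.Adj S) v u := by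
  induction h with
  | refl => exact .refl
  | tail _ hstep ih => exact Relation.ReflTransGen.trans (.single (G.adj_symm hstep)) ih

lemma reach_mono (G : Multigraph V E) {S T : Set E} (hST : S ⊆ T) {u v : V}
    (h : Relation.ReflTransGen (G.Adj S) u v) : Relation.ReflTransGen (G.Adj T) u v :=
  by
  induction h with
  | refl => exact .refl
  | tail _ hs ih => exact ih.tail (G.adj_mono hST hs)

@[simp] lemma isWalk_single (G : Multigraph V E) (v : V) : G.IsWalk [v] [] := trivial

lemma isWalk_cons_iff (G : Multigraph V E) (u w : V) (vs : List V) (e : E) (es : List E) :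
    G.IsWalk (u :: w :: vs) (e :: es) ↔
      (G.ends e = (u, w) ∨ G.ends e = (w, u)) ∧ G.IsWalk (w :: vs) es := Iff.rfl

lemma isWalk_nil (G : Multigraph V E) (es : List E) : ¬ G.IsWalk [] es := by
  cases es <;> simp [IsWalk]

lemma isWalk_single_iff (G : Multigraph V E) (v : V) (es : List E) :
    G.IsWalk [v] es ↔ es = [] := by
  cases es <;> simp [IsWalk]

lemma isWalk_cons_nil (G : Multigraph V E) (u w : V) (vs : List V) :
    ¬ G.IsWalk (u :: w :: vs) [] := by simp [IsWalk]

lemma walk_ne_nil {G : Multigraph V E} {vs : List V} {es : List E} (h : G.IsWalk vs es) :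
    vs ≠ [] := by
  rintro rfl; exact G.isWalk_nil es h

lemma walk_length {G : Multigraph V E} {vs : List V} {es : List E} (h : G.IsWalk vs es) :
    vs.length = es.length + 1 := by
  induction es generalizing vs with
  | nil =>
    match vs with
    | [] => exact absurd h (G.isWalk_nil [])
    | [v] => rfl
    | u :: w :: vs => exact absurd h (G.isWalk_cons_nil u w vs)
  | cons e es ih =>
    match vs with
    | [] => exact absurd h (G.isWalk_nil _)
    | [v] => simp [isWalk_single_iff] at h
    | u :: w :: vs =>
      rw [isWalk_cons_iff] at h
      simp [ih h.2]

lemma walk_edge_mem {G : Multigraph V E} {vs : List V} {es : List E} (h : G.IsWalk vs es)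
    {e : E} (he : e ∈ es) : (G.ends e).1 ∈ vs ∧ (G.ends e).2 ∈ vs := by
  induction es generalizing vs with
  | nil => simp at he
  | cons f es ih =>
    match vs with
    | [] => exact absurd h (G.isWalk_nil _)
    | [v] => simp [isWalk_single_iff] at h
    | u :: w :: vs =>
      rw [isWalk_cons_iff] at h
      rcases List.mem_cons.1 he with rfl | he
      · rcases h.1 with h1 | h1 <;> rw [h1] <;> simp
      · have := ih h.2 he
        exact ⟨List.mem_cons_of_mem _ this.1, List.mem_cons_of_mem _ this.2⟩

lemma walk_append {G : Multigraph V E} {xs ys : List V} {a : V} {es1 es2 : List E}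
    (h1 : G.IsWalk (xs ++ [a]) es1) (h2 : G.IsWalk (a :: ys) es2) :
    G.IsWalk (xs ++ a :: ys) (es1 ++ es2) := by
  induction xs generalizing es1 with
  | nil =>
    rw [List.nil_append] at h1 ⊢
    rw [isWalk_single_iff] at h1
    subst h1; exact h2
  | cons x xs ih =>
    match xs, es1 with
    | [], [] => simp [isWalk_single_iff, IsWalk] at h1
    | [], e :: es1 =>
      have h1' : (G.ends e = (x, a) ∨ G.ends e = (a, x)) ∧ G.IsWalk [a] es1 := h1
      rw [isWalk_single_iff] at h1'
      obtain ⟨he, rfl⟩ := h1'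
      exact ⟨he, h2⟩
    | x' :: xs, [] => simp [IsWalk] at h1
    | x' :: xs, e :: es1 =>
      rw [List.cons_append, List.cons_append, isWalk_cons_iff] at h1
      exact ⟨h1.1, ih h1.2⟩

end Multigraph
namespace Multigraph

variable {V E : Type}

lemma walk_split_vertex {G : Multigraph V E} {vs : List V} {es : List E} (h : G.IsWalk vs es)
    {xs ys : List V} {a : V} (hvs : vs = xs ++ a :: ys) :
    ∃ es1 es2, es = es1 ++ es2 ∧ G.IsWalk (xs ++ [a]) es1 ∧ G.IsWalk (a :: ys) es2 := by
  induction xs generalizing vs es with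
  | nil =>
    subst hvs
    exact ⟨[], es, rfl, G.isWalk_single a, h⟩
  | cons x xs ih =>
    subst hvs
    match xs, es with
    | [], [] => exact absurd h (G.isWalk_cons_nil _ _ _)
    | x' :: xs', [] => exact absurd h (G.isWalk_cons_nil _ _ _)
    | [], e :: es =>
      have h' : (G.ends e = (x, a) ∨ G.ends e = (a, x)) ∧ G.IsWalk (a :: ys) es := h
      exact ⟨[e], es, rfl, ⟨h'.1, G.isWalk_single a⟩, h'.2⟩
    | x' :: xs', e :: es =>
      have h' : (G.ends e = (x, x') ∨ G.ends e = (x', x)) ∧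
          G.IsWalk (x' :: (xs' ++ a :: ys)) es := h
      obtain ⟨es1, es2, rfl, hw1, hw2⟩ := ih h'.2 rfl
      exact ⟨e :: es1, es2, rfl, ⟨h'.1, hw1⟩, hw2⟩

lemma walk_split_edge {G : Multigraph V E} {vs : List V} {es : List E} (h : G.IsWalk vs es)
    {es1 es2 : List E} {e : E} (hes : es = es1 ++ e :: es2) :
    ∃ xs x y ys, vs = xs ++ x :: y :: ys ∧ G.IsWalk (xs ++ [x]) es1 ∧ G.IsWalk (y :: ys) es2 ∧
      (G.ends e = (x, y) ∨ G.ends e = (y, x)) := by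
  induction es1 generalizing vs es with
  | nil =>
    subst hes
    match vs with
    | [] => exact absurd h (G.isWalk_nil _)
    | [v] => simp [isWalk_single_iff] at h
    | u :: w :: vs =>
      exact ⟨[], u, w, vs, rfl, G.isWalk_single u, h.2, h.1⟩
  | cons f es1 ih =>
    subst hes
    match vs with
    | [] => exact absurd h (G.isWalk_nil _)
    | [v] => simp [isWalk_single_iff] at h
    | u :: w :: vs =>
      obtain ⟨xs, x, y, ys, hsplit, hw1, hw2, hee⟩ := ih h.2 rfl
      refine ⟨u :: xs, x, y, ys, by rw [hsplit]; rfl, ?_, hw2, hee⟩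
      rw [List.cons_append]
      rcases xs with _ | ⟨x', xs⟩
      · have hsplit' : w = x := by simpa using congrArg List.head? hsplit
        subst hsplit'
        exact ⟨h.1, hw1⟩
      · have hsplit' : w = x' := by simpa using congrArg List.head? hsplit
        subst hsplit'
        exact ⟨h.1, hw1⟩

lemma walk_reach_head {G : Multigraph V E} {vs : List V} {es : List E} (h : G.IsWalk vs es)
    {u x : V} (hu : vs.head? = some u) (hx : x ∈ vs) :
    Relation.ReflTransGen (G.Adj {f | f ∈ es}) u x := by
  induction es generalizing vs u with
  | nil =>
    match vs with
    | [] => exact absurd h (G.isWalk_nil _)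
    | [v] =>
      simp at hu hx; subst hu; subst hx; exact .refl
    | a :: b :: vs => exact absurd h (G.isWalk_cons_nil _ _ _)
  | cons e es ih =>
    match vs with
    | [] => exact absurd h (G.isWalk_nil _)
    | [v] => simp [isWalk_single_iff] at h
    | a :: b :: vs =>
      simp only [List.head?_cons, Option.some_inj] at hu
      subst hu
      rcases List.mem_cons.1 hx with rfl | hx
      · exact .refl
      · have step : G.Adj {f | f ∈ e :: es} a b := ⟨e, by simp, h.1⟩
        have tail := ih h.2 (u := b) rfl hx
        exact Relation.ReflTransGen.trans (.single step)
          (G.reach_mono (by intro f hf; simp at hf ⊢; exact Or.inr hf) tail)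

lemma walk_reach {G : Multigraph V E} {vs : List V} {es : List E} (h : G.IsWalk vs es)
    {x y : V} (hx : x ∈ vs) (hy : y ∈ vs) :
    Relation.ReflTransGen (G.Adj {f | f ∈ es}) x y := by
  match vs, hx with
  | a :: vs, hx =>
    have h1 := walk_reach_head h (u := a) rfl hx
    have h2 := walk_reach_head h (u := a) rfl hy
    exact Relation.ReflTransGen.trans (G.reach_symm h1) h2

end Multigraph
namespace Multigraph

variable {V E : Type}

lemma walk_nodup_edges {G : Multigraph V E} {vs : List V} {es : List E}
    (h : G.IsWalk vs es) (hnd : vs.Nodup) : es.Nodup := by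
  induction es generalizing vs with
  | nil => exact List.nodup_nil
  | cons e es ih =>
    match vs with
    | [] => exact absurd h (G.isWalk_nil _)
    | [v] => simp [isWalk_single_iff] at h
    | u :: w :: vs =>
      have h' := h.2
      refine List.nodup_cons.2 ⟨?_, ih h' (List.nodup_cons.1 hnd).2⟩
      intro hmem
      have hm := walk_edge_mem h' hmem
      have hu : u ∈ w :: vs := by
        rcases h.1 with h1 | h1 <;> rw [h1] at hm
        · exact hm.1
        · exact hm.2
      exact (List.nodup_cons.1 hnd).1 hu

lemma exists_dup {α : Type*} {l : List α} (h : ¬ l.Nodup) :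
    ∃ (xs : List α) (a : α) (ys : List α), l = xs ++ a :: ys ∧ a ∈ ys := by
  induction l with
  | nil => exact absurd List.nodup_nil h
  | cons a t ih =>
    by_cases ha : a ∈ t
    · exact ⟨[], a, t, rfl, ha⟩
    · have : ¬ t.Nodup := fun hn => h (List.nodup_cons.2 ⟨ha, hn⟩)
      obtain ⟨xs, b, ys, rfl, hb⟩ := ih this
      exact ⟨a :: xs, b, ys, rfl, hb⟩

lemma head?_append_cons {α : Type*} (xs : List α) (a : α) (ys zs : List α) :
    (xs ++ a :: ys).head? = (xs ++ a :: zs).head? := by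
  cases xs <;> simp

lemma getLast?_suffix {α : Type*} (xs : List α) (a : α) (ys : List α) :
    (xs ++ a :: ys).getLast? = (a :: ys).getLast? := by
  rw [List.getLast?_append]
  cases h : (a :: ys).getLast? with
  | none => simp [List.getLast?_eq_none_iff] at h
  | some b => simp

lemma path_of_walk {G : Multigraph V E} {u v : V} :
    ∀ {vs : List V} {es : List E}, G.IsWalk vs es →
    vs.head? = some u → vs.getLast? = some v →
    ∃ vs' es', G.IsPath u v vs' es' ∧ ∀ e ∈ es', e ∈ es := by
  suffices H : ∀ (n : ℕ) (vs : List V) (es : List E), vs.length = n → G.IsWalk vs es →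
      vs.head? = some u → vs.getLast? = some v →
      ∃ vs' es', G.IsPath u v vs' es' ∧ ∀ e ∈ es', e ∈ es by
    intro vs es h hh hl
    exact H vs.length vs es rfl h hh hl
  intro n
  induction n using Nat.strong_induction_on with
  | _ n ih =>
  intro vs es hn h hh hl
  subst hn
  by_cases hnd : vs.Nodup
  · exact ⟨vs, es, ⟨h, hnd, walk_nodup_edges h hnd, hh, hl⟩, fun e he => he⟩
  · obtain ⟨xs, a, ys, rfl, hays⟩ := exists_dup hnd
    obtain ⟨ys1, ys2, rfl⟩ := List.append_of_mem hays
    obtain ⟨es1, es2, rfl, hw1, hw2⟩ := walk_split_vertex h rfl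
    obtain ⟨es3, es4, rfl, hw3, hw4⟩ :=
      walk_split_vertex hw2 (xs := a :: ys1) (a := a) (ys := ys2) rfl
    have hw : G.IsWalk (xs ++ a :: ys2) (es1 ++ es4) := walk_append hw1 hw4
    have hlen : (xs ++ a :: ys2).length < (xs ++ a :: (ys1 ++ a :: ys2)).length := by
      simp
    have hh' : (xs ++ a :: ys2).head? = some u := by
      rw [head?_append_cons xs a ys2 (ys1 ++ a :: ys2)]; exact hh
    have hl' : (xs ++ a :: ys2).getLast? = some v := by
      rw [getLast?_suffix] at hl ⊢
      rw [show a :: (ys1 ++ a :: ys2) = (a :: ys1) ++ a :: ys2 by simp,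
        getLast?_suffix (a :: ys1) a ys2] at hl
      exact hl
    obtain ⟨vs', es', hp, hsub⟩ := ih _ hlen _ _ rfl hw hh' hl'
    refine ⟨vs', es', hp, fun e he => ?_⟩
    have := hsub e he
    simp at this ⊢
    tauto

lemma exists_path_via {G : Multigraph V E} {S : Set E} {u v : V}
    (h : Relation.ReflTransGen (G.Adj S) u v) :
    ∃ vs es, G.IsPath u v vs es ∧ ∀ e ∈ es, e ∈ S := by
  have : ∃ vs es, G.IsWalk vs es ∧ vs.head? = some u ∧ vs.getLast? = some v ∧
      ∀ e ∈ es, e ∈ S := by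
    induction h with
    | refl => exact ⟨[u], [], G.isWalk_single u, rfl, rfl, by simp⟩
    | tail _ hstep ih =>
      obtain ⟨vs, es, hw, hh, hl, hsub⟩ := ih
      rename_i w c _
      obtain ⟨xs, rfl⟩ : ∃ xs, vs = xs ++ [w] := by
        rcases List.eq_nil_or_concat vs with rfl | ⟨xs, b, rfl⟩
        · simp at hl
        · rw [List.concat_eq_append] at *
          rw [List.getLast?_concat] at hl
          exact ⟨xs, by simp at hl; rw [hl]⟩
      obtain ⟨e, heS, hee⟩ := hstep
      have hw2 : G.IsWalk (w :: [c]) [e] := ⟨hee, G.isWalk_single c⟩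
      refine ⟨xs ++ w :: [c], es ++ [e], walk_append hw hw2, ?_, ?_, ?_⟩
      · rw [head?_append_cons xs w [c] []]; exact hh
      · rw [getLast?_suffix]; rfl
      · intro f hf
        rcases List.mem_append.1 hf with hf | hf
        · exact hsub f hf
        · simp at hf; subst hf; exact heS
  obtain ⟨vs, es, hw, hh, hl, hsub⟩ := this
  obtain ⟨vs', es', hp, hsub'⟩ := path_of_walk hw hh hl
  exact ⟨vs', es', hp, fun e he => hsub e (hsub' e he)⟩

lemma walk_reverse {G : Multigraph V E} {vs : List V} {es : List E} (h : G.IsWalk vs es) :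
    G.IsWalk vs.reverse es.reverse := by
  induction es generalizing vs with
  | nil =>
    match vs with
    | [] => exact absurd h (G.isWalk_nil _)
    | [v] => exact h
    | u :: w :: vs => exact absurd h (G.isWalk_cons_nil _ _ _)
  | cons e es ih =>
    match vs with
    | [] => exact absurd h (G.isWalk_nil _)
    | [v] => simp [isWalk_single_iff] at h
    | u :: w :: vs =>
      have h1 : G.IsWalk (w :: [u]) [e] := ⟨Or.symm h.1, G.isWalk_single u⟩
      have h2 : G.IsWalk (vs.reverse ++ [w]) es.reverse := by
        rw [← List.reverse_cons]; exact ih h.2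
      have h3 := walk_append h2 h1
      simpa [List.reverse_cons, List.append_assoc] using h3

lemma path_reverse {G : Multigraph V E} {u v : V} {vs : List V} {es : List E}
    (h : G.IsPath u v vs es) : G.IsPath v u vs.reverse es.reverse :=
  ⟨walk_reverse h.1, List.nodup_reverse.2 h.2.1, List.nodup_reverse.2 h.2.2.1,
    by rw [List.head?_reverse]; exact h.2.2.2.2,
    by rw [List.getLast?_reverse]; exact h.2.2.2.1⟩

end Multigraph
set_option linter.unusedSectionVars false

namespace Multigraph

variable {V E : Type} [Fintype V] [Fintype E] [DecidableEq V]

lemma no_loop {G : Multigraph V E} (htree : G.IsTree) (e : E) :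
    (G.ends e).1 ≠ (G.ends e).2 := by
  intro h
  apply htree.2 {e}
  refine ⟨⟨e, Finset.mem_singleton_self e⟩, ?_, ?_⟩
  · intro x
    by_cases hx : (G.ends e).1 = x
    · right; simp [edgeCount, hx, ← h, hx]
    · left; simp [edgeCount, hx, ← h]
  · intro x y hx hy
    obtain ⟨f, hf, hfx⟩ := hx
    obtain ⟨g, hg, hgy⟩ := hy
    simp only [Finset.mem_singleton] at hf hg
    rw [hf] at hfx; rw [hg] at hgy
    have hx' : x = (G.ends e).1 := by
      rcases hfx with h1 | h1
      · exact h1.symm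
      · rw [h]; exact h1.symm
    have hy' : y = (G.ends e).1 := by
      rcases hgy with h1 | h1
      · exact h1.symm
      · rw [h]; exact h1.symm
    rw [hx', hy']

lemma edgeCount_insert {G : Multigraph V E} {C : Finset E} {e : E} (he : e ∉ C) (x : V) :
    G.edgeCount (insert e C) x =
      ((if (G.ends e).1 = x then 1 else 0) + (if (G.ends e).2 = x then 1 else 0)) +
        G.edgeCount C x := by
  simp [edgeCount, Finset.sum_insert he]

lemma path_tail {G : Multigraph V E} {u v w : V} {vs : List V} {f : E} {es : List E}
    (h : G.IsPath u v (u :: w :: vs) (f :: es)) : G.IsPath w v (w :: vs) es := by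
  obtain ⟨hw, hnd, hned, hh, hl⟩ := h
  exact ⟨hw.2, (List.nodup_cons.1 hnd).2, (List.nodup_cons.1 hned).2, rfl,
    by rw [List.getLast?_cons_cons] at hl; exact hl⟩

lemma path_head_eq {G : Multigraph V E} {u v : V} {vs : List V} {es : List E}
    (h : G.IsPath u v vs es) : ∃ vs', vs = u :: vs' := by
  match vs with
  | [] => exact absurd h.1 (G.isWalk_nil _)
  | a :: vs' =>
    have : a = u := by simpa using h.2.2.2.1
    exact ⟨vs', by rw [this]⟩

lemma path_edgeCount {G : Multigraph V E} (htree : G.IsTree) {u v : V} {vs : List V}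
    {es : List E} (h : G.IsPath u v vs es) (huv : u ≠ v) (x : V) :
    G.edgeCount es.toFinset x =
      (if x = u then 1 else 0) + (if x = v then 1 else 0) +
        (if x ∈ vs ∧ x ≠ u ∧ x ≠ v then 2 else 0) := by
  induction es generalizing vs u with
  | nil =>
    obtain ⟨vs', rfl⟩ := path_head_eq h
    have : vs' = [] := by
      cases vs' with
      | nil => rfl
      | cons b t => exact absurd h.1 (G.isWalk_cons_nil _ _ _)
    subst this
    have : u = v := by simpa using h.2.2.2.2
    exact absurd this huv
  | cons f es ih =>
    obtain ⟨vs', rfl⟩ := path_head_eq h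
    match vs' with
    | [] => exact absurd h.1 (by rw [isWalk_single_iff]; simp)
    | w :: vs' =>
    have hends := h.1.1
    have hfw : u ≠ w := by
      have := no_loop htree f
      rcases hends with h1 | h1 <;> rw [h1] at this <;> simp at this
      · exact this
      · exact Ne.symm this
    have hfnotin : f ∉ es := (List.nodup_cons.1 h.2.2.1).1
    have hunotin : u ∉ w :: vs' := (List.nodup_cons.1 h.2.1).1
    have heps : (if (G.ends f).1 = x then 1 else 0) + (if (G.ends f).2 = x then 1 else 0)
        = (if x = u then 1 else 0) + (if x = w then (1:ℕ) else 0) := by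
      rcases hends with h1 | h1 <;> rw [h1] <;> simp [eq_comm] <;> ring
    rw [List.toFinset_cons, edgeCount_insert (by simpa using hfnotin), heps]
    cases es with
    | nil =>
      have hvs' : vs' = [] := by
        cases vs' with
        | nil => rfl
        | cons b t => exact absurd h.1.2 (G.isWalk_cons_nil _ _ _)
      subst hvs'
      have hwv : w = v := by simpa using h.2.2.2.2
      subst hwv
      simp only [edgeCount, List.toFinset_nil, Finset.sum_empty]
      by_cases h1 : x = u <;> by_cases h2 : x = w <;>
        simp_all [List.mem_cons] <;> omega
    | cons g es' =>
      have htail : G.IsPath w v (w :: vs') (g :: es') := path_tail h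
      have hvs' : vs' ≠ [] := by
        intro hv; subst hv
        exact absurd htail.1 (by rw [isWalk_single_iff]; simp)
      have hvmem : v ∈ vs' := by
        have hl := htail.2.2.2.2
        match vs', hvs' with
        | c :: t, _ =>
          rw [List.getLast?_cons_cons] at hl
          exact List.mem_of_mem_getLast? hl
      have hwnotin : w ∉ vs' := (List.nodup_cons.1 htail.2.1).1
      have hwv : w ≠ v := fun hh => hwnotin (hh ▸ hvmem)
      rw [ih htail hwv]
      by_cases h1 : x = u <;> by_cases h2 : x = w <;> by_cases h3 : x = v <;>
        by_cases h4 : x ∈ vs' <;> simp_all [List.mem_cons] <;> omega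

end Multigraph
namespace Multigraph

variable {V E : Type} [Fintype V] [Fintype E] [DecidableEq V]

lemma path_mem_endpoints {G : Multigraph V E} {u v : V} {vs : List V} {es : List E}
    (h : G.IsPath u v vs es) : u ∈ vs ∧ v ∈ vs :=
  ⟨by have := h.2.2.2.1; exact List.mem_of_mem_head? (by rw [this]; rfl),
   List.mem_of_mem_getLast? (by rw [h.2.2.2.2]; rfl)⟩

lemma cycle_of_path_edge {G : Multigraph V E} (htree : G.IsTree) {u v : V} {vs : List V}
    {es : List E} {e : E} (h : G.IsPath u v vs es) (huv : u ≠ v) (he : e ∉ es)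
    (hends : G.ends e = (u, v) ∨ G.ends e = (v, u)) : False := by
  apply htree.2 (insert e es.toFinset)
  have hcount : ∀ x, G.edgeCount (insert e es.toFinset) x = 0 ∨
      G.edgeCount (insert e es.toFinset) x = 2 := by
    intro x
    rw [edgeCount_insert (by simpa using he), path_edgeCount htree h huv]
    have heps : (if (G.ends e).1 = x then 1 else 0) + (if (G.ends e).2 = x then 1 else 0)
        = (if x = u then 1 else 0) + (if x = v then (1:ℕ) else 0) := by
      rcases hends with h1 | h1 <;> rw [h1] <;> simp [eq_comm] <;> ring
    rw [heps]
    by_cases h1 : x = u <;> by_cases h2 : x = v <;> by_cases h3 : x ∈ vs <;>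
      simp_all <;> omega
  refine ⟨⟨e, Finset.mem_insert_self e _⟩, hcount, ?_⟩
  have hmem : ∀ x, G.Incident (insert e es.toFinset) x → x ∈ vs := by
    intro x hx
    obtain ⟨f, hf, hfx⟩ := hx
    rcases Finset.mem_insert.1 hf with rfl | hf
    · rcases hends with h1 | h1 <;> rw [h1] at hfx <;> simp at hfx <;>
        rcases hfx with rfl | rfl
      · exact (path_mem_endpoints h).1
      · exact (path_mem_endpoints h).2
      · exact (path_mem_endpoints h).2
      · exact (path_mem_endpoints h).1
    · have := walk_edge_mem h.1 (List.mem_toFinset.1 hf)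
      rcases hfx with h1 | h1 <;> rw [← h1] <;> tauto
  intro x y hx hy
  have hr := walk_reach h.1 (hmem x hx) (hmem y hy)
  refine G.reach_mono ?_ hr
  intro f hf
  simp only [Set.mem_setOf_eq] at hf
  simp only [Finset.coe_insert, Set.mem_insert_iff, Finset.mem_coe, List.mem_toFinset]
  exact Or.inr hf

/-- `v` lies on the same side of the cut given by `e` as the first endpoint of `e`. -/
def Side (G : Multigraph V E) (e : E) (v : V) : Prop :=
  Relation.ReflTransGen (G.Adj {f | f ≠ e}) (G.ends e).1 v

lemma side_fst (G : Multigraph V E) (e : E) : G.Side e (G.ends e).1 := .refl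

lemma side_snd {G : Multigraph V E} (htree : G.IsTree) (e : E) :
    ¬ G.Side e (G.ends e).2 := by
  intro h
  obtain ⟨vs, es, hp, hsub⟩ := exists_path_via h
  refine cycle_of_path_edge htree hp (no_loop htree e) ?_ (Or.inl rfl)
  intro hmem
  exact (hsub e hmem) rfl

lemma side_reach {G : Multigraph V E} {e : E} {x y : V}
    (h : Relation.ReflTransGen (G.Adj {f | f ≠ e}) x y) : G.Side e x ↔ G.Side e y :=
  ⟨fun hx => hx.trans h, fun hy => hy.trans (G.reach_symm h)⟩

lemma side_walk {G : Multigraph V E} {e : E} {vs : List V} {es : List E}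
    (h : G.IsWalk vs es) (he : e ∉ es) {x y : V} (hx : x ∈ vs) (hy : y ∈ vs) :
    G.Side e x ↔ G.Side e y := by
  refine side_reach (G.reach_mono ?_ (walk_reach h hx hy))
  intro f hf
  simp only [Set.mem_setOf_eq] at hf ⊢
  rintro rfl
  exact he hf

/-- The endpoints of `e` are separated by the cut of `e`. -/
lemma side_ends_ne {G : Multigraph V E} (htree : G.IsTree) (e : E) :
    ¬ (G.Side e (G.ends e).1 ↔ G.Side e (G.ends e).2) := by
  intro h
  exact side_snd htree e (h.1 (G.side_fst e))

/-- `u` and `v` are separated by the cut of `e`. -/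
def Cross (G : Multigraph V E) (e : E) (u v : V) : Prop :=
  ¬ (G.Side e u ↔ G.Side e v)

/-- The set of edges separating `u` from `v`. -/
noncomputable def sep (G : Multigraph V E) (u v : V) : Finset E :=
  Finset.univ.filter (fun e => G.Cross e u v)

lemma mem_sep {G : Multigraph V E} {e : E} {u v : V} :
    e ∈ G.sep u v ↔ G.Cross e u v := by
  simp [sep]

lemma cross_symm {G : Multigraph V E} {e : E} {u v : V} :
    G.Cross e u v ↔ G.Cross e v u := by unfold Cross; tauto

lemma sep_comm {G : Multigraph V E} (u v : V) : G.sep u v = G.sep v u := by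
  ext e; simp only [mem_sep]; exact cross_symm

lemma sep_self {G : Multigraph V E} (u : V) : G.sep u u = ∅ := by
  ext e; simp only [mem_sep, Finset.notMem_empty, iff_false]
  unfold Cross; tauto

lemma sep_symmDiff {G : Multigraph V E} (u w v : V) :
    G.sep u v = symmDiff (G.sep u w) (G.sep w v) := by
  ext e
  simp only [Finset.mem_symmDiff, mem_sep]
  unfold Cross
  tauto

lemma path_edges_eq_sep {G : Multigraph V E} (htree : G.IsTree) {u v : V} {vs : List V}
    {es : List E} (h : G.IsPath u v vs es) : es.toFinset = G.sep u v := by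
  ext e
  simp only [List.mem_toFinset, mem_sep]
  constructor
  · intro he
    obtain ⟨es1, es2, rfl⟩ := List.append_of_mem he
    obtain ⟨xs, x, y, ys, hvs, hw1, hw2, hends⟩ := walk_split_edge h.1 rfl
    have hnd := h.2.2.1
    have he1 : e ∉ es1 := by
      intro hmem
      have := List.disjoint_of_nodup_append hnd
      exact this hmem (by simp)
    have he2 : e ∉ es2 := by
      have := (List.nodup_append.1 hnd).2.1
      exact (List.nodup_cons.1 this).1
    have hu : u ∈ xs ++ [x] := by
      have hh := h.2.2.2.1
      rw [hvs] at hh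
      cases xs with
      | nil => simp at hh ⊢; simp [hh]
      | cons a t => simp at hh ⊢; simp [hh]
    have hv : v ∈ y :: ys := by
      have hl := h.2.2.2.2
      rw [hvs, getLast?_suffix, List.getLast?_cons_cons] at hl
      exact List.mem_of_mem_getLast? (by rw [hl]; rfl)
    have hux : G.Side e u ↔ G.Side e x := side_walk hw1 he1 hu (by simp)
    have hyv : G.Side e y ↔ G.Side e v := side_walk hw2 he2 (by simp) hv
    have hxy : ¬ (G.Side e x ↔ G.Side e y) := by
      rcases hends with h1 | h1 <;> have := side_ends_ne htree e <;> rw [h1] at this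
      · exact this
      · tauto
    unfold Cross
    tauto
  · intro hc
    by_contra he
    exact hc (side_walk h.1 he (path_mem_endpoints h).1 (path_mem_endpoints h).2)

end Multigraph
namespace Multigraph

variable {V E : Type} [Fintype V] [Fintype E] [DecidableEq V]

/-- Sum of the lengths of the edges separating `u` from `v`. -/
noncomputable def len (G : Multigraph V E) (ℓ : E → ℝ) (u v : V) : ℝ :=
  ∑ e ∈ G.sep u v, ℓ e

lemma exists_path {G : Multigraph V E} (htree : G.IsTree) (u v : V) :
    ∃ vs es, G.IsPath u v vs es := by
  obtain ⟨vs, es, hp, _⟩ := exists_path_via (htree.1 u v)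
  exact ⟨vs, es, hp⟩

lemma path_sum_eq_len {G : Multigraph V E} (htree : G.IsTree) {ℓ : E → ℝ} {u v : V}
    {vs : List V} {es : List E} (h : G.IsPath u v vs es) :
    (es.map ℓ).sum = G.len ℓ u v := by
  rw [len, ← path_edges_eq_sep htree h, List.sum_toFinset _ h.2.2.1]

lemma dist_eq_len {G : Multigraph V E} (htree : G.IsTree) (ℓ : E → ℝ) (u v : V) :
    G.dist ℓ u v = G.len ℓ u v := by
  have : {x : ℝ | ∃ (vs : List V) (es : List E), G.IsPath u v vs es ∧ x = (es.map ℓ).sum}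
      = {G.len ℓ u v} := by
    ext x
    simp only [Set.mem_setOf_eq, Set.mem_singleton_iff]
    constructor
    · rintro ⟨vs, es, hp, rfl⟩
      exact path_sum_eq_len htree hp
    · rintro rfl
      obtain ⟨vs, es, hp⟩ := exists_path htree u v
      exact ⟨vs, es, hp, (path_sum_eq_len htree hp).symm⟩
  rw [dist, this, csInf_singleton]

lemma len_comm {G : Multigraph V E} (ℓ : E → ℝ) (u v : V) :
    G.len ℓ u v = G.len ℓ v u := by rw [len, len, sep_comm]

lemma len_self {G : Multigraph V E} (ℓ : E → ℝ) (u : V) : G.len ℓ u u = 0 := by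
  rw [len, sep_self]; rfl

lemma len_nonneg {G : Multigraph V E} {ℓ : E → ℝ} (hℓ : ∀ e, 0 < ℓ e) (u v : V) :
    0 ≤ G.len ℓ u v :=
  Finset.sum_nonneg fun e _ => (hℓ e).le

lemma sep_eq_empty_iff {G : Multigraph V E} (htree : G.IsTree) {u v : V} :
    G.sep u v = ∅ ↔ u = v := by
  constructor
  · intro h
    obtain ⟨vs, es, hp⟩ := exists_path htree u v
    have hes : es = [] := by
      have := path_edges_eq_sep htree hp
      rw [h] at this
      simpa using this
    subst hes
    obtain ⟨vs', rfl⟩ := path_head_eq hp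
    have : vs' = [] := by
      cases vs' with
      | nil => rfl
      | cons b t => exact absurd hp.1 (G.isWalk_cons_nil _ _ _)
    subst this
    simpa using hp.2.2.2.2
  · rintro rfl; exact sep_self u

lemma len_eq_zero_iff {G : Multigraph V E} (htree : G.IsTree) {ℓ : E → ℝ}
    (hℓ : ∀ e, 0 < ℓ e) {u v : V} : G.len ℓ u v = 0 ↔ u = v := by
  rw [← sep_eq_empty_iff htree (u := u) (v := v)]
  constructor
  · intro h
    by_contra hne
    have : 0 < G.len ℓ u v :=
      Finset.sum_pos (fun e _ => hℓ e) (Finset.nonempty_iff_ne_empty.2 hne)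
    linarith
  · intro h; rw [len, h]; rfl

lemma sum_symmDiff_eq {A B : Finset E} (f : E → ℝ) :
    ∑ e ∈ symmDiff A B, f e = ∑ e ∈ A, f e + ∑ e ∈ B, f e - 2 * ∑ e ∈ A ∩ B, f e := by
  rw [symmDiff_eq_sup_sdiff_inf]
  simp only [Finset.sup_eq_union, Finset.inf_eq_inter]
  have h1 : (A ∩ B : Finset E) ⊆ (A ∪ B : Finset E) :=
    (Finset.inter_subset_left).trans Finset.subset_union_left
  rw [Finset.sum_sdiff_eq_sub h1]
  have := Finset.sum_union_inter (s₁ := A) (s₂ := B) (f := f)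
  linarith

lemma len_add_sub {G : Multigraph V E} (ℓ : E → ℝ) (u w v : V) :
    G.len ℓ u v = G.len ℓ u w + G.len ℓ w v - 2 * ∑ e ∈ G.sep u w ∩ G.sep w v, ℓ e := by
  rw [len, sep_symmDiff u w v, sum_symmDiff_eq]
  rfl

lemma len_triangle {G : Multigraph V E} {ℓ : E → ℝ} (hℓ : ∀ e, 0 < ℓ e) (u w v : V) :
    G.len ℓ u v ≤ G.len ℓ u w + G.len ℓ w v := by
  rw [len_add_sub ℓ u w v]
  have : 0 ≤ ∑ e ∈ G.sep u w ∩ G.sep w v, ℓ e :=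
    Finset.sum_nonneg fun e _ => (hℓ e).le
  linarith

/-- `x` lies between `u` and `v`. -/
def Btw (G : Multigraph V E) (ℓ : E → ℝ) (u x v : V) : Prop :=
  G.len ℓ u x + G.len ℓ x v = G.len ℓ u v

lemma btw_iff {G : Multigraph V E} {ℓ : E → ℝ} (hℓ : ∀ e, 0 < ℓ e) {u x v : V} :
    G.Btw ℓ u x v ↔ G.sep u x ∩ G.sep x v = ∅ := by
  rw [Btw, len_add_sub ℓ u x v]
  constructor
  · intro h
    by_contra hne
    have : 0 < ∑ e ∈ G.sep u x ∩ G.sep x v, ℓ e :=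
      Finset.sum_pos (fun e _ => hℓ e) (Finset.nonempty_iff_ne_empty.2 hne)
    linarith
  · intro h
    rw [h]
    simp

lemma sep_union_of_btw {G : Multigraph V E} {ℓ : E → ℝ} (hℓ : ∀ e, 0 < ℓ e) {u x v : V}
    (h : G.Btw ℓ u x v) : G.sep u v = G.sep u x ∪ G.sep x v := by
  rw [sep_symmDiff u x v, symmDiff_eq_sup_sdiff_inf]
  simp only [Finset.sup_eq_union, Finset.inf_eq_inter]
  rw [(btw_iff hℓ).1 h]
  simp

lemma btw_refl_left (G : Multigraph V E) {ℓ : E → ℝ} (u v : V) : G.Btw ℓ u u v := by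
  rw [Btw, len_self]; ring

lemma btw_refl_right (G : Multigraph V E) {ℓ : E → ℝ} (u v : V) : G.Btw ℓ u v v := by
  rw [Btw, len_self]; ring

lemma btw_symm {G : Multigraph V E} {ℓ : E → ℝ} {u x v : V} (h : G.Btw ℓ u x v) :
    G.Btw ℓ v x u := by
  rw [Btw] at h ⊢
  rw [len_comm ℓ v x, len_comm ℓ x u, len_comm ℓ v u]
  linarith

end Multigraph
namespace Multigraph

variable {V E : Type} [Fintype V] [Fintype E] [DecidableEq V]

/-- `e` is incident to `v`. -/
def Inc (G : Multigraph V E) (e : E) (v : V) : Prop :=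
  (G.ends e).1 = v ∨ (G.ends e).2 = v

lemma path_first_edge {G : Multigraph V E} {u v : V} {vs : List V} {f : E} {es : List E}
    (h : G.IsPath u v vs (f :: es)) :
    G.Inc f u ∧ ∀ g ∈ es, ¬ G.Inc g u := by
  obtain ⟨vs', rfl⟩ := path_head_eq h
  match vs' with
  | [] => exact absurd h.1 (by rw [isWalk_single_iff]; simp)
  | w :: vs'' =>
    constructor
    · rcases h.1.1 with h1 | h1
      · exact Or.inl (by rw [h1])
      · exact Or.inr (by rw [h1])
    · intro g hg hinc
      have hmem := walk_edge_mem h.1.2 hg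
      have hunotin : u ∉ w :: vs'' := (List.nodup_cons.1 h.2.1).1
      rcases hinc with h1 | h1 <;> rw [h1] at hmem
      · exact hunotin hmem.1
      · exact hunotin hmem.2

lemma sep_nonempty_path {G : Multigraph V E} (htree : G.IsTree) {u x : V} {e : E}
    (he : e ∈ G.sep u x) :
    ∃ (w : V) (vs : List V) (f : E) (es : List E),
      G.IsPath u x (u :: w :: vs) (f :: es) ∧ (f :: es).toFinset = G.sep u x := by
  obtain ⟨vs, es, hp⟩ := exists_path htree u x
  have hsep := path_edges_eq_sep htree hp
  obtain ⟨vs', rfl⟩ := path_head_eq hp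
  match vs', es with
  | [], es =>
    have : es = [] := by
      cases es with
      | nil => rfl
      | cons f es => exact absurd hp.1 (by rw [isWalk_single_iff]; simp)
    subst this
    rw [← hsep] at he
    simp at he
  | w :: vs'', [] => exact absurd hp.1 (G.isWalk_cons_nil _ _ _)
  | w :: vs'', f :: es => exact ⟨w, vs'', f, es, hp, hsep⟩

lemma sep_incident_unique {G : Multigraph V E} (htree : G.IsTree) {u x : V} {e e' : E}
    (he : e ∈ G.sep u x) (hi : G.Inc e u) (he' : e' ∈ G.sep u x) (hi' : G.Inc e' u) :
    e = e' := by
  obtain ⟨w, vs, f, es, hp, hsep⟩ := sep_nonempty_path htree he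
  have hfirst := path_first_edge hp
  have hef : e = f := by
    rw [← hsep] at he
    simp at he
    rcases he with rfl | he
    · rfl
    · exact absurd hi (hfirst.2 e he)
  have hef' : e' = f := by
    rw [← hsep] at he'
    simp at he'
    rcases he' with rfl | he'
    · rfl
    · exact absurd hi' (hfirst.2 e' he')
  rw [hef, hef']

/-- Two separator sets out of `v` through distinct incident edges are disjoint. -/
lemma sep_disjoint {G : Multigraph V E} (htree : G.IsTree) {v a b : V} {e₁ e₂ : E}
    (h1 : e₁ ∈ G.sep v a) (hi1 : G.Inc e₁ v) (h2 : e₂ ∈ G.sep v b) (hi2 : G.Inc e₂ v)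
    (hne : e₁ ≠ e₂) : G.sep v a ∩ G.sep v b = ∅ := by
  have he1b : e₁ ∉ G.sep v b := fun hmem => hne (sep_incident_unique htree hmem hi1 h2 hi2)
  rw [Finset.eq_empty_iff_forall_notMem]
  rintro f hf
  rw [Finset.mem_inter] at hf
  -- path from v to b avoids e₁, so its vertices are on v's side of e₁
  obtain ⟨vsb, esb, hpb⟩ := exists_path htree v b
  have hsepb := path_edges_eq_sep htree hpb
  have he1esb : e₁ ∉ esb := by
    intro hmem
    exact he1b (by rw [← hsepb]; simpa using hmem)
  have hfb : f ∈ esb := by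
    have := hf.2
    rw [← hsepb] at this
    simpa using this
  have hvmem := (path_mem_endpoints hpb).1
  have hfendb := walk_edge_mem hpb.1 hfb
  have hsideb1 : G.Side e₁ (G.ends f).1 ↔ G.Side e₁ v := side_walk hpb.1 he1esb hfendb.1 hvmem
  -- path from v to a starts with e₁, and f is in its tail
  obtain ⟨w, vsa, g, esa, hpa, hsepa⟩ := sep_nonempty_path htree h1
  have hgsep : g ∈ G.sep v a := by rw [← hsepa]; simp
  have hginc : G.Inc g v := (path_first_edge hpa).1
  have hge : e₁ = g := sep_incident_unique htree h1 hi1 hgsep hginc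
  subst hge
  have hftail : f ∈ esa := by
    have := hf.1
    rw [← hsepa] at this
    simp at this
    rcases this with rfl | hh
    · exact absurd hf.2 he1b
    · exact hh
  have htail : G.IsWalk (w :: vsa) esa := hpa.1.2
  have he1tail : e₁ ∉ esa := (List.nodup_cons.1 hpa.2.2.1).1
  have hfenda := walk_edge_mem htail hftail
  have hsidea1 : G.Side e₁ (G.ends f).1 ↔ G.Side e₁ w :=
    side_walk htail he1tail hfenda.1 (by simp)
  have hvw : ¬ (G.Side e₁ v ↔ G.Side e₁ w) := by
    have hne' := side_ends_ne htree e₁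
    rcases hpa.1.1 with h1' | h1' <;> rw [h1'] at hne' <;> simp only [Prod.fst, Prod.snd] at hne' <;> tauto
  exact hvw (hsideb1.symm.trans hsidea1)

lemma degree_eq_card {G : Multigraph V E} (htree : G.IsTree) (v : V) :
    G.degree v = (Finset.univ.filter (fun e => G.Inc e v)).card := by
  rw [degree, Finset.card_eq_sum_ones, Finset.sum_filter]
  apply Finset.sum_congr rfl
  intro e _
  have := no_loop htree e
  unfold Inc
  by_cases h1 : (G.ends e).1 = v <;> by_cases h2 : (G.ends e).2 = v <;> simp_all

lemma one_le_degree {G : Multigraph V E} (htree : G.IsTree) {e : E} {v : V}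
    (h : G.Inc e v) : 1 ≤ G.degree v := by
  rw [degree_eq_card htree]
  rw [Nat.one_le_iff_ne_zero, ← Nat.pos_iff_ne_zero, Finset.card_pos]
  exact ⟨e, by simp [h]⟩

lemma incident_of_ne {G : Multigraph V E} (htree : G.IsTree) {u v : V} (h : u ≠ v) :
    ∃ e, G.Inc e u ∧ e ∈ G.sep u v := by
  have : G.sep u v ≠ ∅ := fun hc => h ((sep_eq_empty_iff htree).1 hc)
  obtain ⟨e, he⟩ := Finset.nonempty_iff_ne_empty.2 this
  obtain ⟨w, vs, f, es, hp, hsep⟩ := sep_nonempty_path htree he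
  exact ⟨f, (path_first_edge hp).1, by rw [← hsep]; simp⟩

lemma degree_ge_three {G : Multigraph V E} (htree : G.IsTree) (hdeg : ∀ x, G.degree x ≠ 2)
    (hV : ∃ a b : V, a ≠ b) {v : V} (hnl : ¬ G.IsLeaf v) :
    3 ≤ (Finset.univ.filter (fun e => G.Inc e v)).card := by
  have h1 : 1 ≤ G.degree v := by
    obtain ⟨a, b, hab⟩ := hV
    have hex : ∃ u, u ≠ v := by
      by_cases hav : a = v
      · refine ⟨b, fun hb => hab ?_⟩
        rw [hav, hb]
      · exact ⟨a, hav⟩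
    obtain ⟨u, hu⟩ := hex
    obtain ⟨e, hinc, _⟩ := incident_of_ne htree (Ne.symm hu)
    exact one_le_degree htree hinc
  have h2 := hdeg v
  have h3 : G.degree v ≠ 1 := hnl
  rw [degree_eq_card htree] at h1 h2 h3
  omega

lemma exists_three_distinct {s : Finset E} (h : 3 ≤ s.card) :
    ∃ a b c, a ∈ s ∧ b ∈ s ∧ c ∈ s ∧ a ≠ b ∧ a ≠ c ∧ b ≠ c := by
  obtain ⟨a, ha⟩ := Finset.card_pos.1 (show 0 < s.card by omega)
  have h2 : 2 ≤ (s.erase a).card := by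
    rw [Finset.card_erase_of_mem ha]; omega
  obtain ⟨b, hb⟩ := Finset.card_pos.1 (show 0 < (s.erase a).card by omega)
  have h3 : 1 ≤ ((s.erase a).erase b).card := by
    rw [Finset.card_erase_of_mem hb]; omega
  obtain ⟨c, hc⟩ := Finset.card_pos.1 (by omega : 0 < ((s.erase a).erase b).card)
  refine ⟨a, b, c, ha, Finset.mem_of_mem_erase hb,
    Finset.mem_of_mem_erase (Finset.mem_of_mem_erase hc), ?_, ?_, ?_⟩
  · exact fun hab => (Finset.ne_of_mem_erase hb) hab.symm
  · exact fun hac => (Finset.ne_of_mem_erase (Finset.mem_of_mem_erase hc)) hac.symm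
  · exact fun hbc => (Finset.ne_of_mem_erase hc) hbc.symm

end Multigraph
namespace Multigraph

variable {V E : Type} [Fintype V] [Fintype E] [DecidableEq V]

lemma edge_ne {G : Multigraph V E} (htree : G.IsTree) {e : E} {x y : V}
    (hends : G.ends e = (x, y) ∨ G.ends e = (y, x)) : x ≠ y := by
  have := no_loop htree e
  rcases hends with h1 | h1 <;> rw [h1] at this <;> simp at this
  · exact this
  · exact Ne.symm this

lemma sep_edge {G : Multigraph V E} (htree : G.IsTree) {e : E} {x y : V}
    (hends : G.ends e = (x, y) ∨ G.ends e = (y, x)) : G.sep x y = {e} := by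
  have hxy : x ≠ y := edge_ne htree hends
  have hp : G.IsPath x y [x, y] [e] :=
    ⟨⟨hends, trivial⟩, by simp [hxy], List.nodup_singleton e, rfl, rfl⟩
  rw [← path_edges_eq_sep htree hp]
  simp

lemma symmDiff_singleton_not_mem {A : Finset E} {f : E} (hf : f ∉ A) :
    symmDiff A {f} = insert f A := by
  ext g
  simp only [Finset.mem_symmDiff, Finset.mem_singleton, Finset.mem_insert]
  constructor
  · rintro (⟨hg, hne⟩ | ⟨rfl, _⟩)
    · exact Or.inr hg
    · exact Or.inl rfl
  · rintro (rfl | hg)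
    · exact Or.inr ⟨rfl, hf⟩
    · exact Or.inl ⟨hg, fun hh => hf (hh ▸ hg)⟩

/-- The other endpoint of an edge incident to `v`. -/
noncomputable def other (G : Multigraph V E) (e : E) (v : V) : V :=
  if (G.ends e).1 = v then (G.ends e).2 else (G.ends e).1

lemma other_spec {G : Multigraph V E} {e : E} {v : V} (h : G.Inc e v) :
    G.ends e = (v, G.other e v) ∨ G.ends e = (G.other e v, v) := by
  unfold other
  rcases h with h1 | h1
  · left; rw [if_pos h1, ← h1]
  · by_cases h2 : (G.ends e).1 = v
    · left; rw [if_pos h2, ← h2]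
    · right; rw [if_neg h2, ← h1]

lemma exists_leaf_cross {G : Multigraph V E} (htree : G.IsTree) {ℓ : E → ℝ}
    (hℓ : ∀ e, 0 < ℓ e) (hdeg : ∀ x, G.degree x ≠ 2) (hV : ∃ a b : V, a ≠ b)
    {e : E} {v : V} (hinc : G.Inc e v) :
    ∃ a, G.IsLeaf a ∧ e ∈ G.sep v a := by
  classical
  set T := Finset.univ.filter (fun x => e ∈ G.sep v x) with hT
  have hTne : T.Nonempty := by
    refine ⟨G.other e v, ?_⟩
    rw [hT, Finset.mem_filter]
    refine ⟨Finset.mem_univ _, ?_⟩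
    rw [sep_edge htree (other_spec hinc)]
    simp
  obtain ⟨x, hxT, hmax⟩ := Finset.exists_max_image T (fun y => G.len ℓ v y) hTne
  have hxsep : e ∈ G.sep v x := by
    rw [hT, Finset.mem_filter] at hxT
    exact hxT.2
  refine ⟨x, ?_, hxsep⟩
  by_contra hnl
  -- x is not a leaf, so it has at least 3 incident edges
  have h3 := degree_ge_three htree hdeg hV hnl
  -- at most one edge of sep v x is incident to x
  have hcard1 : ((Finset.univ.filter (fun f => G.Inc f x)) ∩ G.sep v x).card ≤ 1 := by
    rw [Finset.card_le_one]
    intro f1 hf1 f2 hf2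
    simp only [Finset.mem_inter, Finset.mem_filter] at hf1 hf2
    exact sep_incident_unique htree (by rw [sep_comm]; exact hf1.2) hf1.1.2
      (by rw [sep_comm]; exact hf2.2) hf2.1.2
  have hex : ∃ f, G.Inc f x ∧ f ∉ G.sep v x := by
    by_contra hc
    push_neg at hc
    have hsub : (Finset.univ.filter (fun f => G.Inc f x)) ⊆
        (Finset.univ.filter (fun f => G.Inc f x)) ∩ G.sep v x := by
      intro f hf
      rw [Finset.mem_inter]
      refine ⟨hf, ?_⟩
      rw [Finset.mem_filter] at hf
      exact hc f hf.2
    have := Finset.card_le_card hsub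
    omega
  obtain ⟨f, hfinc, hfnot⟩ := hex
  set y := G.other f x with hy
  have hfends := other_spec hfinc
  have hsepxy : G.sep x y = {f} := sep_edge htree hfends
  have hfe : f ≠ e := fun hh => hfnot (hh ▸ hxsep)
  have hsepvy : G.sep v y = insert f (G.sep v x) := by
    rw [sep_symmDiff v x y, hsepxy, symmDiff_comm (G.sep v x) {f}, symmDiff_comm {f} (G.sep v x), symmDiff_singleton_not_mem hfnot]
  have hymem : y ∈ T := by
    rw [hT, Finset.mem_filter]
    exact ⟨Finset.mem_univ _, by rw [hsepvy]; exact Finset.mem_insert_of_mem hxsep⟩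
  have hlt : G.len ℓ v x < G.len ℓ v y := by
    rw [len, len, hsepvy, Finset.sum_insert hfnot]
    have := hℓ f
    linarith
  have := hmax y hymem
  linarith

end Multigraph
namespace Multigraph

variable {V E : Type} [Fintype V] [Fintype E] [DecidableEq V]

lemma path_split {G : Multigraph V E} {u v x : V} {vs : List V} {es : List E}
    (h : G.IsPath u v vs es) (hx : x ∈ vs) :
    ∃ xs ys es1 es2, vs = xs ++ x :: ys ∧ es = es1 ++ es2 ∧
      G.IsPath u x (xs ++ [x]) es1 ∧ G.IsPath x v (x :: ys) es2 := by
  obtain ⟨xs, ys, rfl⟩ := List.append_of_mem hx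
  obtain ⟨es1, es2, rfl, hw1, hw2⟩ := walk_split_vertex h.1 rfl
  have hnd := h.2.1
  have hnde := h.2.2.1
  have hsub1 : (xs ++ [x]).Sublist (xs ++ x :: ys) :=
    List.Sublist.append_left (by simp) xs
  have hsub2 : (x :: ys).Sublist (xs ++ x :: ys) := List.sublist_append_right _ _
  refine ⟨xs, ys, es1, es2, rfl, rfl, ⟨hw1, hnd.sublist hsub1,
    hnde.sublist (es1.sublist_append_left es2), ?_, List.getLast?_concat⟩,
    ⟨hw2, hnd.sublist hsub2, hnde.sublist (List.sublist_append_right es1 es2), rfl, ?_⟩⟩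
  · rw [head?_append_cons xs x [] ys]
    exact h.2.2.2.1
  · rw [← getLast?_suffix xs x ys]
    exact h.2.2.2.2

lemma btw_of_mem_path {G : Multigraph V E} (htree : G.IsTree) {ℓ : E → ℝ} {u v x : V}
    {vs : List V} {es : List E} (h : G.IsPath u v vs es) (hx : x ∈ vs) :
    G.Btw ℓ u x v := by
  obtain ⟨xs, ys, es1, es2, hvs, hes, hp1, hp2⟩ := path_split h hx
  rw [Btw, ← path_sum_eq_len htree hp1, ← path_sum_eq_len htree hp2,
    ← path_sum_eq_len htree h, hes]
  simp

lemma mem_path_of_btw {G : Multigraph V E} (htree : G.IsTree) {ℓ : E → ℝ}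
    (hℓ : ∀ e, 0 < ℓ e) {u v x : V} {vs : List V} {es : List E}
    (h : G.IsPath u v vs es) (hb : G.Btw ℓ u x v) : x ∈ vs := by
  induction es generalizing u vs with
  | nil =>
    obtain ⟨vs', rfl⟩ := path_head_eq h
    have hvs' : vs' = [] := by
      cases vs' with
      | nil => rfl
      | cons b t => exact absurd h.1 (G.isWalk_cons_nil _ _ _)
    subst hvs'
    have huv : u = v := by simpa using h.2.2.2.2
    subst huv
    rw [Btw, len_self] at hb
    have h1 := len_nonneg (G := G) hℓ u x
    have h2 := len_nonneg (G := G) hℓ x u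
    have : G.len ℓ u x = 0 := by linarith
    have := (len_eq_zero_iff htree hℓ).1 this
    simp [← this]
  | cons e₁ rest ih =>
    obtain ⟨vs', rfl⟩ := path_head_eq h
    match vs' with
    | [] => exact absurd h.1 (by rw [isWalk_single_iff]; simp)
    | w :: vs'' =>
    by_cases hxu : x = u
    · simp [hxu]
    have hdisj : G.sep u x ∩ G.sep x v = ∅ := (btw_iff hℓ).1 hb
    have hends : G.ends e₁ = (u, w) ∨ G.ends e₁ = (w, u) := h.1.1
    have hsepuw : G.sep u w = {e₁} := sep_edge htree hends
    -- e₁ is not in sep x v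
    have he₁xv : e₁ ∉ G.sep x v := by
      intro hmem
      have he₁ux : e₁ ∉ G.sep u x := by
        intro hc
        have : e₁ ∈ G.sep u x ∩ G.sep x v := Finset.mem_inter.2 ⟨hc, hmem⟩
        rw [hdisj] at this
        simp at this
      -- take a path from v to x; it contains e₁
      obtain ⟨vsQ, esQ, hQ⟩ := exists_path htree v x
      have hsepQ := path_edges_eq_sep htree hQ
      have he₁Q : e₁ ∈ esQ := by
        rw [← List.mem_toFinset, hsepQ, sep_comm]
        exact hmem
      obtain ⟨q1, q2, rfl⟩ := List.append_of_mem he₁Q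
      obtain ⟨as, p, q, bs, hvsQ, hwq1, hwq2, hendspq⟩ := walk_split_edge hQ.1 rfl
      have hndQ := hQ.2.2.1
      have he₁q2 : e₁ ∉ q2 := (List.nodup_cons.1 (List.nodup_append.1 hndQ).2.1).1
      -- x is in the suffix q :: bs
      have hxbs : x ∈ q :: bs := by
        have hl := hQ.2.2.2.2
        rw [hvsQ, getLast?_suffix, List.getLast?_cons_cons] at hl
        exact List.mem_of_mem_getLast? (by rw [hl]; rfl)
      -- sides
      have hqx : G.Side e₁ q ↔ G.Side e₁ x := side_walk hwq2 he₁q2 (by simp) hxbs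
      have hux : G.Side e₁ u ↔ G.Side e₁ x := by
        by_contra hc
        exact he₁ux (mem_sep.2 hc)
      have huwne : ¬ (G.Side e₁ u ↔ G.Side e₁ w) := by
        have hne' := side_ends_ne htree e₁
        rcases hends with h1' | h1' <;> rw [h1'] at hne' <;>
          simp only [Prod.fst, Prod.snd] at hne' <;> tauto
      have hqwfalse : q ≠ w := by
        intro hqw
        rw [hqw] at hqx
        exact huwne (hux.trans hqx.symm)
      have hqu : q = u := by
        rcases hendspq with h1' | h1' <;> rcases hends with h2' | h2' <;>
            rw [h2'] at h1'
        · injection h1' with ha hb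
          exact absurd hb.symm hqwfalse
        · injection h1' with ha hb
          exact hb.symm
        · injection h1' with ha hb
          exact ha.symm
        · injection h1' with ha hb
          exact absurd ha.symm hqwfalse
      subst hqu
      -- the suffix is a path from u to x, so sep u x ⊆ sep v x
      have hsubl : (q :: bs).Sublist vsQ := by
        rw [hvsQ]
        exact ((q :: bs).sublist_cons_self p).trans (List.sublist_append_right as (p :: q :: bs))
      have hp2 : G.IsPath q x (q :: bs) q2 := by
        refine ⟨hwq2, hQ.2.1.sublist hsubl, ?_, rfl, ?_⟩
        · exact hndQ.sublist ((q2.sublist_cons_self e₁).trans (List.sublist_append_right _ _))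
        · have hl := hQ.2.2.2.2
          rw [hvsQ, getLast?_suffix, List.getLast?_cons_cons] at hl
          exact hl
      have hsepux : G.sep q x = q2.toFinset := (path_edges_eq_sep htree hp2).symm
      have hsub : G.sep q x ⊆ G.sep x v := by
        rw [hsepux, sep_comm]
        intro g hg
        rw [← hsepQ]
        simp only [List.mem_toFinset] at hg ⊢
        simp [hg]
      have : G.sep q x = ∅ := by
        rw [Finset.eq_empty_iff_forall_notMem]
        intro g hg
        have hgg : g ∈ G.sep q x ∩ G.sep x v := Finset.mem_inter.2 ⟨hg, hsub hg⟩
        rw [hdisj] at hgg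
        simp at hgg
      exact hxu ((sep_eq_empty_iff htree).1 this).symm
    -- now show Btw w x v and apply IH
    have hbw : G.Btw ℓ w x v := by
      rw [btw_iff hℓ, Finset.eq_empty_iff_forall_notMem]
      intro g hg
      rw [Finset.mem_inter] at hg
      have hgwx : g ∈ G.sep w x := hg.1
      rw [sep_symmDiff w u x, sep_comm w u, hsepuw, Finset.mem_symmDiff] at hgwx
      rcases hgwx with ⟨hg1, _⟩ | ⟨hg1, hg2⟩
      · simp at hg1
        subst hg1
        exact he₁xv hg.2
      · have : g ∈ G.sep u x ∩ G.sep x v := Finset.mem_inter.2 ⟨hg1, hg.2⟩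
        rw [hdisj] at this
        simp at this
    have := ih (path_tail h) hbw
    simp [this]

end Multigraph
namespace Multigraph

variable {V E : Type} [Fintype V] [Fintype E] [DecidableEq V]

lemma eq_of_btw_btw_len {G : Multigraph V E} (htree : G.IsTree) {ℓ : E → ℝ}
    (hℓ : ∀ e, 0 < ℓ e) {a b m m' : V} (h1 : G.Btw ℓ a m b) (h2 : G.Btw ℓ a m' b)
    (hlen : G.len ℓ a m = G.len ℓ a m') : m = m' := by
  obtain ⟨vs, es, hp⟩ := exists_path htree a b
  have hm : m ∈ vs := mem_path_of_btw htree hℓ hp h1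
  have hm' : m' ∈ vs := mem_path_of_btw htree hℓ hp h2
  obtain ⟨xs, ys, es1, es2, hvs, hes, hp1, hp2⟩ := path_split hp hm
  rw [hvs] at hm'
  rcases List.mem_append.1 hm' with hc | hc
  · have hc' : m' ∈ xs ++ [m] := by simp [hc]
    have hbtw : G.Btw ℓ a m' m := btw_of_mem_path htree hp1 hc'
    have : G.len ℓ m' m = 0 := by
      rw [Btw] at hbtw
      linarith
    exact ((len_eq_zero_iff htree hℓ).1 this).symm
  · have hbtw : G.Btw ℓ m m' b := btw_of_mem_path htree hp2 hc
    rw [Btw] at h1 h2 hbtw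
    have : G.len ℓ m m' = 0 := by linarith
    exact (len_eq_zero_iff htree hℓ).1 this

lemma med_exists {G : Multigraph V E} (htree : G.IsTree) {ℓ : E → ℝ}
    (hℓ : ∀ e, 0 < ℓ e) (a b c : V) :
    ∃ m, G.Btw ℓ a m b ∧ G.Btw ℓ a m c ∧ G.Btw ℓ b m c := by
  obtain ⟨vs, es, hp⟩ := exists_path htree a b
  induction es generalizing a vs with
  | nil =>
    obtain ⟨vs', rfl⟩ := path_head_eq hp
    have hvs' : vs' = [] := by
      cases vs' with
      | nil => rfl
      | cons d t => exact absurd hp.1 (G.isWalk_cons_nil _ _ _)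
    subst hvs'
    have hab : a = b := by simpa using hp.2.2.2.2
    subst hab
    exact ⟨a, G.btw_refl_left a a, G.btw_refl_left a c, G.btw_refl_left a c⟩
  | cons e₁ rest ih =>
    obtain ⟨vs', rfl⟩ := path_head_eq hp
    match vs' with
    | [] => exact absurd hp.1 (by rw [isWalk_single_iff]; simp)
    | w :: vs'' =>
    have hends : G.ends e₁ = (a, w) ∨ G.ends e₁ = (w, a) := hp.1.1
    have hsepaw : G.sep a w = {e₁} := sep_edge htree hends
    have he₁ab : e₁ ∈ G.sep a b := by
      rw [← path_edges_eq_sep htree hp]; simp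
    have hinc₁ : G.Inc e₁ a := (path_first_edge hp).1
    by_cases hcase : e₁ ∈ G.sep a c
    · -- recurse on the tail path
      obtain ⟨m, hm1, hm2, hm3⟩ := ih w (w :: vs'') (path_tail hp)
      have hmvs : m ∈ w :: vs'' := mem_path_of_btw htree hℓ (path_tail hp) hm1
      have hab : G.Btw ℓ a m b :=
        btw_of_mem_path htree hp (by simp [hmvs])
      refine ⟨m, hab, ?_, hm3⟩
      -- show Btw a m c
      have hsepwm : G.sep w m ⊆ rest.toFinset := by
        obtain ⟨xs, ys, es1, es2, hvs2, hes2, hq1, hq2⟩ := path_split (path_tail hp) hmvs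
        rw [← path_edges_eq_sep htree hq1, hes2]
        intro g hg
        simp at hg ⊢
        simp [hg]
      have he₁wm : e₁ ∉ G.sep w m := by
        intro hc'
        have : e₁ ∈ rest.toFinset := hsepwm hc'
        have hnd := hp.2.2.1
        rw [List.mem_toFinset] at this
        exact (List.nodup_cons.1 hnd).1 this
      have hsepam : G.sep a m = insert e₁ (G.sep w m) := by
        rw [sep_symmDiff a w m, hsepaw, symmDiff_comm ({e₁} : Finset E) (G.sep w m),
          symmDiff_singleton_not_mem he₁wm]
      have he₁wc : e₁ ∉ G.sep w c := by
        rw [sep_symmDiff w a c, sep_comm w a, hsepaw, Finset.mem_symmDiff]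
        simp [hcase]
      have he₁mc : e₁ ∉ G.sep m c := by
        rw [sep_symmDiff m w c, Finset.mem_symmDiff, sep_comm m w]
        rintro (⟨h1, _⟩ | ⟨h1, _⟩)
        · exact he₁wm h1
        · exact he₁wc h1
      rw [btw_iff hℓ, Finset.eq_empty_iff_forall_notMem]
      intro g hg
      rw [Finset.mem_inter, hsepam, Finset.mem_insert] at hg
      rcases hg with ⟨rfl | hg1, hg2⟩
      · exact he₁mc hg2
      · have := (btw_iff hℓ).1 hm2
        have hgg : g ∈ G.sep w m ∩ G.sep m c := Finset.mem_inter.2 ⟨hg1, hg2⟩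
        rw [this] at hgg
        simp at hgg
    · -- the median is a itself
      by_cases hac : G.sep a c = ∅
      · refine ⟨a, G.btw_refl_left a b, G.btw_refl_left a c, ?_⟩
        rw [btw_iff hℓ, hac]
        simp
      · obtain ⟨f, hf⟩ := Finset.nonempty_iff_ne_empty.2 hac
        obtain ⟨w', vs2, f₁, es2, hp2, hsep2⟩ := sep_nonempty_path htree hf
        have hf₁ac : f₁ ∈ G.sep a c := by rw [← hsep2]; simp
        have hf₁inc : G.Inc f₁ a := (path_first_edge hp2).1
        have hne : e₁ ≠ f₁ := fun hh => hcase (hh ▸ hf₁ac)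
        have hdisj := sep_disjoint htree he₁ab hinc₁ hf₁ac hf₁inc hne
        refine ⟨a, G.btw_refl_left a b, G.btw_refl_left a c, ?_⟩
        rw [btw_iff hℓ, sep_comm b a, Finset.eq_empty_iff_forall_notMem]
        intro g hg
        rw [Finset.mem_inter] at hg
        have : g ∈ G.sep a b ∩ G.sep a c := Finset.mem_inter.2 hg
        rw [hdisj] at this
        simp at this

lemma exists_leaf_btw {G : Multigraph V E} (htree : G.IsTree) {ℓ : E → ℝ}
    (hℓ : ∀ e, 0 < ℓ e) (hdeg : ∀ x, G.degree x ≠ 2) (hV : ∃ a b : V, a ≠ b)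
    (u v : V) : ∃ l, G.IsLeaf l ∧ G.Btw ℓ u v l := by
  by_cases hleaf : G.IsLeaf v
  · exact ⟨v, hleaf, G.btw_refl_right u v⟩
  have hthree := degree_ge_three htree hdeg hV hleaf
  obtain ⟨e₁, e₂, e₃, h1', h2', h3', h12, h13, h23⟩ := exists_three_distinct hthree
  simp only [Finset.mem_filter] at h1' h2' h3'
  have h1 := h1'.2
  have h2 := h2'.2
  have h3 := h3'.2
  by_cases huv : u = v
  · subst huv
    obtain ⟨l, hl, hsep⟩ := exists_leaf_cross htree hℓ hdeg hV h1
    exact ⟨l, hl, G.btw_refl_left u l⟩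
  · obtain ⟨e', hinc', hsep'⟩ := incident_of_ne htree (Ne.symm huv)
    have : ∃ e, G.Inc e v ∧ e ≠ e' := by
      by_cases he1 : e₁ = e'
      · exact ⟨e₂, h2, fun hh => h12 (he1 ▸ hh ▸ rfl)⟩
      · exact ⟨e₁, h1, he1⟩
    obtain ⟨e, hinc, hne⟩ := this
    obtain ⟨l, hl, hsep⟩ := exists_leaf_cross htree hℓ hdeg hV hinc
    refine ⟨l, hl, ?_⟩
    have hdisj := sep_disjoint htree hsep' hinc' hsep hinc (Ne.symm hne)
    rw [btw_iff hℓ, sep_comm u v, Finset.eq_empty_iff_forall_notMem]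
    intro g hg
    have : g ∈ G.sep v u ∩ G.sep v l := hg
    rw [hdisj] at this
    simp at this

lemma med_len_eq {G : Multigraph V E} {ℓ : E → ℝ} {a b c m : V}
    (h1 : G.Btw ℓ a m b) (h2 : G.Btw ℓ a m c) (h3 : G.Btw ℓ b m c) :
    G.len ℓ a m = (G.len ℓ a b + G.len ℓ a c - G.len ℓ b c) / 2 := by
  rw [Btw] at h1 h2 h3
  have e1 : G.len ℓ m b = G.len ℓ b m := len_comm ℓ m b
  linarith

lemma len_point_formula {G : Multigraph V E} (htree : G.IsTree) {ℓ : E → ℝ}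
    (hℓ : ∀ e, 0 < ℓ e) {a b w x m : V} (hx : G.Btw ℓ a x b)
    (hm0 : G.Btw ℓ a m b) (hm1 : G.Btw ℓ a m w) (hm2 : G.Btw ℓ b m w) :
    G.len ℓ x w = |G.len ℓ a x - G.len ℓ a m| + G.len ℓ m w := by
  obtain ⟨vs, es, hp⟩ := exists_path htree a b
  have hmvs : m ∈ vs := mem_path_of_btw htree hℓ hp hm0
  have hxvs : x ∈ vs := mem_path_of_btw htree hℓ hp hx
  obtain ⟨xs, ys, es1, es2, hvs, hes, hp1, hp2⟩ := path_split hp hmvs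
  rw [hvs] at hxvs
  have hbtwxmw : G.Btw ℓ x m w := by
    rw [btw_iff hℓ, Finset.eq_empty_iff_forall_notMem]
    intro g hg
    rw [Finset.mem_inter] at hg
    rcases List.mem_append.1 hxvs with hc | hc
    · -- x is before m : sep x m ⊆ sep a m
      have hc' : x ∈ xs ++ [m] := by simp [hc]
      have hbtw : G.Btw ℓ a x m := btw_of_mem_path htree hp1 hc'
      have hsub : G.sep x m ⊆ G.sep a m := by
        rw [sep_union_of_btw hℓ hbtw]
        exact Finset.subset_union_right
      have hdisj := (btw_iff hℓ).1 hm1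
      have : g ∈ G.sep a m ∩ G.sep m w := Finset.mem_inter.2 ⟨hsub hg.1, hg.2⟩
      rw [hdisj] at this
      simp at this
    · -- x is after m : sep x m ⊆ sep m b, use Btw b m w
      have hbtw : G.Btw ℓ m x b := btw_of_mem_path htree hp2 hc
      have hsub : G.sep m x ⊆ G.sep m b := by
        rw [sep_union_of_btw hℓ hbtw]
        exact Finset.subset_union_left
      have hdisj := (btw_iff hℓ).1 hm2
      have : g ∈ G.sep b m ∩ G.sep m w := Finset.mem_inter.2
        ⟨by rw [sep_comm b m]; exact hsub (by rw [sep_comm x m] at hg; exact hg.1), hg.2⟩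
      rw [hdisj] at this
      simp at this
  have hxmw : G.len ℓ x m + G.len ℓ m w = G.len ℓ x w := hbtwxmw
  have habs : G.len ℓ x m = |G.len ℓ a x - G.len ℓ a m| := by
    rcases List.mem_append.1 hxvs with hc | hc
    · have hc' : x ∈ xs ++ [m] := by simp [hc]
      have hbtw : G.Btw ℓ a x m := btw_of_mem_path htree hp1 hc'
      rw [Btw] at hbtw
      rw [abs_of_nonpos (by have := len_nonneg (G := G) hℓ x m; linarith)]
      linarith
    · have hbtw : G.Btw ℓ m x b := btw_of_mem_path htree hp2 hc
      have hxb : G.Btw ℓ a x b := hx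
      rw [Btw] at hbtw hxb hm0
      have h1 : G.len ℓ x m = G.len ℓ m x := len_comm ℓ x m
      have hnn := len_nonneg (G := G) hℓ m x
      rw [abs_of_nonneg (by linarith)]
      linarith
  linarith

end Multigraph
namespace Multigraph

variable {V E : Type} [Fintype V] [Fintype E] [DecidableEq V]

lemma internal_is_median {G : Multigraph V E} (htree : G.IsTree) {ℓ : E → ℝ}
    (hℓ : ∀ e, 0 < ℓ e) (hdeg : ∀ x, G.degree x ≠ 2) (hV : ∃ a b : V, a ≠ b)
    {v : V} (hnl : ¬ G.IsLeaf v) :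
    ∃ a b c : V, G.IsLeaf a ∧ G.IsLeaf b ∧ G.IsLeaf c ∧
      G.Btw ℓ a v b ∧ G.Btw ℓ a v c ∧ G.Btw ℓ b v c := by
  have hthree := degree_ge_three htree hdeg hV hnl
  obtain ⟨e₁, e₂, e₃, h1', h2', h3', h12, h13, h23⟩ := exists_three_distinct hthree
  simp only [Finset.mem_filter] at h1' h2' h3'
  obtain ⟨a, ha, hsa⟩ := exists_leaf_cross htree hℓ hdeg hV h1'.2
  obtain ⟨b, hb, hsb⟩ := exists_leaf_cross htree hℓ hdeg hV h2'.2
  obtain ⟨c, hc, hsc⟩ := exists_leaf_cross htree hℓ hdeg hV h3'.2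
  have hd12 := sep_disjoint htree hsa h1'.2 hsb h2'.2 h12
  have hd13 := sep_disjoint htree hsa h1'.2 hsc h3'.2 h13
  have hd23 := sep_disjoint htree hsb h2'.2 hsc h3'.2 h23
  refine ⟨a, b, c, ha, hb, hc, ?_, ?_, ?_⟩ <;>
    rw [btw_iff hℓ] <;> rw [Finset.eq_empty_iff_forall_notMem]
  · intro g hg
    rw [Finset.mem_inter, sep_comm a v] at hg
    have : g ∈ G.sep v a ∩ G.sep v b := Finset.mem_inter.2 hg
    rw [hd12] at this; simp at this
  · intro g hg
    rw [Finset.mem_inter, sep_comm a v] at hg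
    have : g ∈ G.sep v a ∩ G.sep v c := Finset.mem_inter.2 hg
    rw [hd13] at this; simp at this
  · intro g hg
    rw [Finset.mem_inter, sep_comm b v] at hg
    have : g ∈ G.sep v b ∩ G.sep v c := Finset.mem_inter.2 hg
    rw [hd23] at this; simp at this

lemma eq_of_leaf_len {G : Multigraph V E} (htree : G.IsTree) {ℓ : E → ℝ}
    (hℓ : ∀ e, 0 < ℓ e) (hdeg : ∀ x, G.degree x ≠ 2) (hV : ∃ a b : V, a ≠ b)
    {x y : V} (h : ∀ l, G.IsLeaf l → G.len ℓ x l = G.len ℓ y l) : x = y := by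
  obtain ⟨l, hl, hbtw⟩ := exists_leaf_btw htree hℓ hdeg hV x y
  rw [Btw] at hbtw
  have := h l hl
  have : G.len ℓ x y = 0 := by linarith
  exact (len_eq_zero_iff htree hℓ).1 this

/-- The distance from a median point to any other vertex, expressed via distances
between the four reference points. -/
lemma med_leaf_len {G : Multigraph V E} (htree : G.IsTree) {ℓ : E → ℝ}
    (hℓ : ∀ e, 0 < ℓ e) {a b c m l : V} (hm1 : G.Btw ℓ a m b) (hm2 : G.Btw ℓ a m c)
    (hm3 : G.Btw ℓ b m c) :
    G.len ℓ m l =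
      |(G.len ℓ a b + G.len ℓ a c - G.len ℓ b c) / 2 -
        (G.len ℓ a b + G.len ℓ a l - G.len ℓ b l) / 2| +
      (G.len ℓ l a + G.len ℓ l b - G.len ℓ a b) / 2 := by
  obtain ⟨p, hp1, hp2, hp3⟩ := med_exists htree hℓ a b l
  have hform := len_point_formula htree hℓ (w := l) hm1 hp1 hp2 hp3
  have h1 : G.len ℓ a m = (G.len ℓ a b + G.len ℓ a c - G.len ℓ b c) / 2 :=
    med_len_eq hm1 hm2 hm3
  have h2 : G.len ℓ a p = (G.len ℓ a b + G.len ℓ a l - G.len ℓ b l) / 2 :=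
    med_len_eq hp1 hp2 hp3
  have h3 : G.len ℓ l p = (G.len ℓ l a + G.len ℓ l b - G.len ℓ a b) / 2 :=
    med_len_eq (btw_symm hp2) (btw_symm hp3) hp1
  rw [hform, h1, h2, ← h3, len_comm ℓ p l]

lemma edge_no_between {G : Multigraph V E} (htree : G.IsTree) {ℓ : E → ℝ}
    (hℓ : ∀ e, 0 < ℓ e) {e : E} {x y : V}
    (hends : G.ends e = (x, y) ∨ G.ends e = (y, x)) :
    x ≠ y ∧ G.len ℓ x y = ℓ e ∧ ∀ z, G.Btw ℓ x z y → z = x ∨ z = y := by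
  have hxy := edge_ne htree hends
  have hsep := sep_edge htree hends
  refine ⟨hxy, by rw [len, hsep, Finset.sum_singleton], ?_⟩
  intro z hz
  have hsub : G.sep x z ⊆ {e} := by
    rw [← hsep, sep_union_of_btw hℓ hz]
    exact Finset.subset_union_left
  rcases Finset.subset_singleton_iff.1 hsub with h0 | h0
  · exact Or.inl ((sep_eq_empty_iff htree).1 h0).symm
  · right
    have hdisj := (btw_iff hℓ).1 hz
    have : G.sep z y = ∅ := by
      rw [Finset.eq_empty_iff_forall_notMem]
      intro g hg
      have hg' : g ∈ G.sep x z := by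
        have : g ∈ G.sep x y := by
          rw [sep_union_of_btw hℓ hz]
          exact Finset.mem_union_right _ hg
        rw [hsep] at this
        rw [h0]
        exact this
      have : g ∈ G.sep x z ∩ G.sep z y := Finset.mem_inter.2 ⟨hg', hg⟩
      rw [hdisj] at this
      simp at this
    exact (sep_eq_empty_iff htree).1 this

lemma exists_edge_of_no_between {G : Multigraph V E} (htree : G.IsTree) {ℓ : E → ℝ}
    (hℓ : ∀ e, 0 < ℓ e) {x y : V} (hxy : x ≠ y)
    (h : ∀ z, G.Btw ℓ x z y → z = x ∨ z = y) :
    ∃ e, G.ends e = (x, y) ∨ G.ends e = (y, x) := by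
  obtain ⟨vs, es, hp⟩ := exists_path htree x y
  obtain ⟨vs', rfl⟩ := path_head_eq hp
  match vs', es with
  | [], es =>
    have : es = [] := by
      cases es with
      | nil => rfl
      | cons f t => exact absurd hp.1 (by simp [isWalk_single_iff])
    subst this
    exact absurd (by simpa using hp.2.2.2.2) hxy
  | w :: vs'', [] => exact absurd hp.1 (G.isWalk_cons_nil _ _ _)
  | w :: vs'', f :: rest =>
    cases vs'' with
    | nil =>
      have hwy : w = y := by simpa using hp.2.2.2.2
      exact ⟨f, by rw [← hwy]; exact hp.1.1⟩
    | cons w2 t =>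
      exfalso
      have hw : w ∈ x :: w :: w2 :: t := by simp
      have hbtw : G.Btw ℓ x w y := btw_of_mem_path htree hp hw
      rcases h w hbtw with rfl | rfl
      · exact (List.nodup_cons.1 hp.2.1).1 (by simp)
      · have hl := hp.2.2.2.2
        rw [List.getLast?_cons_cons, List.getLast?_cons_cons] at hl
        have : w ∈ w2 :: t := List.mem_of_mem_getLast? (by rw [hl]; rfl)
        have hnd := hp.2.1
        rw [List.nodup_cons] at hnd
        obtain ⟨_, hnd2⟩ := hnd
        rw [List.nodup_cons] at hnd2
        exact hnd2.1 this

lemma edge_unique {G : Multigraph V E} (htree : G.IsTree) {e e' : E} {x y : V}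
    (h1 : G.ends e = (x, y) ∨ G.ends e = (y, x))
    (h2 : G.ends e' = (x, y) ∨ G.ends e' = (y, x)) : e = e' := by
  have hs1 := sep_edge htree h1
  have hs2 := sep_edge htree h2
  have : ({e} : Finset E) = {e'} := by rw [← hs1, ← hs2]
  simpa using this

end Multigraph
/-- A finite metric tree with no degree-2 vertices (and at least two leaves) is
determined up to isometric isomorphism by the pairwise distances between its leaves:
if the leaf sets of two such trees are in a distance-preserving bijection, then
there is an isomorphism of the underlying combinatorial trees preserving all
edge lengths. -/
theorem metric_tree_determined_by_leaf_distances
    {V₁ E₁ V₂ E₂ : Type} [Fintype V₁] [Fintype E₁] [Fintype V₂] [Fintype E₂]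
    [DecidableEq V₁] [DecidableEq V₂]
    (G₁ : Multigraph V₁ E₁) (G₂ : Multigraph V₂ E₂)
    (ℓ₁ : E₁ → ℝ) (ℓ₂ : E₂ → ℝ) (hℓ₁ : ∀ e, 0 < ℓ₁ e) (hℓ₂ : ∀ e, 0 < ℓ₂ e)
    (htree₁ : G₁.IsTree) (htree₂ : G₂.IsTree)
    (hdeg₁ : ∀ v, G₁.degree v ≠ 2) (hdeg₂ : ∀ v, G₂.degree v ≠ 2)
    (hleaves₁ : ∃ a b : V₁, G₁.IsLeaf a ∧ G₁.IsLeaf b ∧ a ≠ b)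
    (φ : {v : V₁ // G₁.IsLeaf v} ≃ {v : V₂ // G₂.IsLeaf v})
    (hφ : ∀ a b : {v : V₁ // G₁.IsLeaf v},
      G₂.dist ℓ₂ (φ a) (φ b) = G₁.dist ℓ₁ (a : V₁) (b : V₁)) :
    ∃ (fV : V₁ ≃ V₂) (fE : E₁ ≃ E₂),
      (∀ e : E₁,
        G₂.ends (fE e) = (fV (G₁.ends e).1, fV (G₁.ends e).2) ∨
        G₂.ends (fE e) = (fV (G₁.ends e).2, fV (G₁.ends e).1)) ∧
      (∀ e : E₁, ℓ₂ (fE e) = ℓ₁ e) := by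
  classical
  obtain ⟨a₀, b₀, ha₀, hb₀, hab₀⟩ := hleaves₁
  have hV₁ : ∃ a b : V₁, a ≠ b := ⟨a₀, b₀, hab₀⟩
  have hV₂ : ∃ a b : V₂, a ≠ b := by
    refine ⟨φ ⟨a₀, ha₀⟩, φ ⟨b₀, hb₀⟩, fun hc => hab₀ ?_⟩
    have := φ.injective (Subtype.ext hc)
    exact congrArg Subtype.val this
  have hφ' : ∀ a b : {v : V₁ // G₁.IsLeaf v},
      G₂.len ℓ₂ (φ a) (φ b) = G₁.len ℓ₁ (a : V₁) (b : V₁) := by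
    intro a b
    rw [← Multigraph.dist_eq_len htree₂, ← Multigraph.dist_eq_len htree₁]
    exact hφ a b
  -- construct the vertex map
  have hFex : ∀ v : V₁, ∃ w : V₂, ∀ l : {x : V₁ // G₁.IsLeaf x},
      G₂.len ℓ₂ w (φ l) = G₁.len ℓ₁ v (l : V₁) := by
    intro v
    by_cases hv : G₁.IsLeaf v
    · exact ⟨φ ⟨v, hv⟩, fun l => hφ' ⟨v, hv⟩ l⟩
    · obtain ⟨a, b, c, ha, hb, hc, hab, hac, hbc⟩ :=
        Multigraph.internal_is_median htree₁ hℓ₁ hdeg₁ hV₁ hv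
      obtain ⟨m, hm1, hm2, hm3⟩ :=
        Multigraph.med_exists htree₂ hℓ₂ (φ ⟨a, ha⟩ : V₂) (φ ⟨b, hb⟩) (φ ⟨c, hc⟩)
      refine ⟨m, fun l => ?_⟩
      rw [Multigraph.med_leaf_len htree₂ hℓ₂ hm1 hm2 hm3 (l := (φ l : V₂)),
          Multigraph.med_leaf_len htree₁ hℓ₁ hab hac hbc (l := (l : V₁))]
      simp only [hφ' ⟨a, ha⟩ ⟨b, hb⟩, hφ' ⟨a, ha⟩ ⟨c, hc⟩, hφ' ⟨b, hb⟩ ⟨c, hc⟩,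
        hφ' ⟨a, ha⟩ l, hφ' ⟨b, hb⟩ l, hφ' l ⟨a, ha⟩, hφ' l ⟨b, hb⟩]
  choose F hF using hFex
  have hFleaf : ∀ (l : V₁) (hl : G₁.IsLeaf l), F l = φ ⟨l, hl⟩ := by
    intro l hl
    apply Multigraph.eq_of_leaf_len htree₂ hℓ₂ hdeg₂ hV₂
    intro l₂ hl₂
    have hl₂eq : l₂ = (φ (φ.symm ⟨l₂, hl₂⟩) : V₂) := by simp
    rw [hl₂eq, hF l (φ.symm ⟨l₂, hl₂⟩), hφ' ⟨l, hl⟩ (φ.symm ⟨l₂, hl₂⟩)]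
  have hFdist : ∀ u v : V₁, G₂.len ℓ₂ (F u) (F v) = G₁.len ℓ₁ u v := by
    intro u v
    apply le_antisymm
    · obtain ⟨l₂, hl₂, hbtw⟩ :=
        Multigraph.exists_leaf_btw htree₂ hℓ₂ hdeg₂ hV₂ (F u) (F v)
      set l := φ.symm ⟨l₂, hl₂⟩ with hldef
      have hl₂eq : l₂ = (φ l : V₂) := by simp [hldef]
      rw [Multigraph.Btw] at hbtw
      have h1 : G₂.len ℓ₂ (F u) l₂ = G₁.len ℓ₁ u (l : V₁) := by rw [hl₂eq]; exact hF u l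
      have h2 : G₂.len ℓ₂ (F v) l₂ = G₁.len ℓ₁ v (l : V₁) := by rw [hl₂eq]; exact hF v l
      have htri := Multigraph.len_triangle (G := G₁) hℓ₁ u v (l : V₁)
      linarith
    · obtain ⟨l, hl, hbtw⟩ := Multigraph.exists_leaf_btw htree₁ hℓ₁ hdeg₁ hV₁ u v
      rw [Multigraph.Btw] at hbtw
      have h1 := hF u ⟨l, hl⟩
      have h2 := hF v ⟨l, hl⟩
      have htri := Multigraph.len_triangle (G := G₂) hℓ₂ (F u) (F v) (φ ⟨l, hl⟩ : V₂)
      linarith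
  have hFinj : Function.Injective F := by
    intro u v huv
    have hzz := hFdist u v
    rw [huv, Multigraph.len_self] at hzz
    exact ((Multigraph.len_eq_zero_iff htree₁ hℓ₁).1 hzz.symm)
  have hFsurj : Function.Surjective F := by
    intro w
    by_cases hw : G₂.IsLeaf w
    · refine ⟨((φ.symm ⟨w, hw⟩ : {v : V₁ // G₁.IsLeaf v}) : V₁), ?_⟩
      rw [hFleaf _ (φ.symm ⟨w, hw⟩).2]
      simp
    · obtain ⟨A, B, C, hA, hB, hC, hAB, hAC, hBC⟩ :=
        Multigraph.internal_is_median htree₂ hℓ₂ hdeg₂ hV₂ hw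
      set a := φ.symm ⟨A, hA⟩ with hadef
      set b := φ.symm ⟨B, hB⟩ with hbdef
      set c := φ.symm ⟨C, hC⟩ with hcdef
      have hAeq : A = (φ a : V₂) := by simp [hadef]
      have hBeq : B = (φ b : V₂) := by simp [hbdef]
      have hCeq : C = (φ c : V₂) := by simp [hcdef]
      obtain ⟨v, hv1, hv2, hv3⟩ :=
        Multigraph.med_exists htree₁ hℓ₁ (a : V₁) (b : V₁) (c : V₁)
      refine ⟨v, ?_⟩
      apply Multigraph.eq_of_leaf_len htree₂ hℓ₂ hdeg₂ hV₂
      intro l₂ hl₂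
      set l := φ.symm ⟨l₂, hl₂⟩ with hldef
      have hl₂eq : l₂ = (φ l : V₂) := by simp [hldef]
      rw [hl₂eq, hF v l]
      rw [Multigraph.med_leaf_len htree₁ hℓ₁ hv1 hv2 hv3 (l := (l : V₁)),
          Multigraph.med_leaf_len htree₂ hℓ₂ hAB hAC hBC (l := (φ l : V₂))]
      rw [hAeq, hBeq, hCeq]
      simp only [hφ' a b, hφ' a c, hφ' b c, hφ' a l, hφ' b l, hφ' l a, hφ' l b]
  -- construct the edge map
  have hEex : ∀ e : E₁, ∃ e₂ : E₂,
      (G₂.ends e₂ = (F (G₁.ends e).1, F (G₁.ends e).2) ∨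
       G₂.ends e₂ = (F (G₁.ends e).2, F (G₁.ends e).1)) ∧ ℓ₂ e₂ = ℓ₁ e := by
    intro e
    obtain ⟨hxy, hlen, hbet⟩ :=
      Multigraph.edge_no_between htree₁ hℓ₁ (e := e) (Or.inl rfl)
    have hFxy : F (G₁.ends e).1 ≠ F (G₁.ends e).2 := fun hc => hxy (hFinj hc)
    have hbet₂ : ∀ z₂, G₂.Btw ℓ₂ (F (G₁.ends e).1) z₂ (F (G₁.ends e).2) →
        z₂ = F (G₁.ends e).1 ∨ z₂ = F (G₁.ends e).2 := by
      intro z₂ hz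
      obtain ⟨z, rfl⟩ := hFsurj z₂
      have hz' : G₁.Btw ℓ₁ (G₁.ends e).1 z (G₁.ends e).2 := by
        rw [Multigraph.Btw] at hz ⊢
        rw [hFdist, hFdist, hFdist] at hz
        exact hz
      rcases hbet z hz' with h | h
      · left; rw [h]
      · right; rw [h]
    obtain ⟨e₂, he₂⟩ := Multigraph.exists_edge_of_no_between htree₂ hℓ₂ hFxy hbet₂
    refine ⟨e₂, he₂, ?_⟩
    have hl2 := (Multigraph.edge_no_between htree₂ hℓ₂ (e := e₂) he₂).2.1
    rw [← hl2, hFdist, hlen]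
  choose fE hfE using hEex
  have hEinj : Function.Injective fE := by
    intro e e' hee
    have h1 := (hfE e).1
    have h2 := (hfE e').1
    rw [hee] at h1
    have hkey : G₁.ends e' = ((G₁.ends e).1, (G₁.ends e).2) ∨
        G₁.ends e' = ((G₁.ends e).2, (G₁.ends e).1) := by
      rcases h1 with h1 | h1 <;> rcases h2 with h2 | h2 <;> rw [h1] at h2
      · left
        injection h2 with hu hv
        rw [Prod.ext_iff]
        exact ⟨hFinj hu.symm, hFinj hv.symm⟩
      · right
        injection h2 with hu hv
        rw [Prod.ext_iff]
        exact ⟨hFinj hv.symm, hFinj hu.symm⟩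
      · right
        injection h2 with hu hv
        rw [Prod.ext_iff]
        exact ⟨hFinj hu.symm, hFinj hv.symm⟩
      · left
        injection h2 with hu hv
        rw [Prod.ext_iff]
        exact ⟨hFinj hv.symm, hFinj hu.symm⟩
    exact Multigraph.edge_unique htree₁ (Or.inl rfl) hkey
  have hEsurj : Function.Surjective fE := by
    intro e₂
    obtain ⟨x, hx⟩ := hFsurj (G₂.ends e₂).1
    obtain ⟨y, hy⟩ := hFsurj (G₂.ends e₂).2
    obtain ⟨hxy₂, hlen₂, hbet₂⟩ :=
      Multigraph.edge_no_between htree₂ hℓ₂ (e := e₂) (Or.inl rfl)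
    have hxy : x ≠ y := by
      intro hc
      apply hxy₂
      rw [← hx, ← hy, hc]
    have hbet₁ : ∀ z, G₁.Btw ℓ₁ x z y → z = x ∨ z = y := by
      intro z hz
      have hz2 : G₂.Btw ℓ₂ (F x) (F z) (F y) := by
        rw [Multigraph.Btw, hFdist, hFdist, hFdist]
        exact hz
      rw [hx, hy] at hz2
      rcases hbet₂ (F z) hz2 with h | h
      · left; apply hFinj; rw [h, hx]
      · right; apply hFinj; rw [h, hy]
    obtain ⟨e, he⟩ := Multigraph.exists_edge_of_no_between htree₁ hℓ₁ hxy hbet₁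
    refine ⟨e, ?_⟩
    have h1 := (hfE e).1
    have h1' : G₂.ends (fE e) = (F x, F y) ∨ G₂.ends (fE e) = (F y, F x) := by
      rcases he with he | he <;> rw [he] at h1 <;> simp at h1 <;> tauto
    rw [hx, hy] at h1'
    exact Multigraph.edge_unique htree₂ h1' (Or.inl rfl)
  refine ⟨Equiv.ofBijective F ⟨hFinj, hFsurj⟩, Equiv.ofBijective fE ⟨hEinj, hEsurj⟩,
    fun e => (hfE e).1, fun e => (hfE e).2⟩
end
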